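/- arXiv:1905.05152 — 5 statements merged into one kernel-verified Lean document; each statement's English description precedes it below -/
import Mathlib

section
/- (Plancherel theorem for the Laplace transform) If f is a Laplace-Pego function of order x ≥ 0, then (1/(2π)) · ∫_{-∞}^{∞} |𝓛{f}(x + i·y)|² dy = ∫₀^∞ e^{-2·x·t} · |f(t)|² dt. -/
open MeasureTheory Complex Filter Set

/-- The Laplace transform of `f : ℝ → ℂ` (thought of as a function on `(0,∞)`)
at the complex point `z`. -/
noncomputable def LaplaceTransform (f : ℝ → ℂ) (z : ℂ) : ℂ :=
  ∫ t in Set.Ioi (0 : ℝ), f t * Complex.exp (-z * t)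

/-- `f` is a Laplace-Pego function of order `x`: it is measurable and
`f_x : t ↦ f t * e^{-x t}` belongs to `L¹((0,∞)) ∩ L²((0,∞))`. -/
def IsLaplacePego (f : ℝ → ℂ) (x : ℝ) : Prop :=
  Measurable f ∧
  MeasureTheory.IntegrableOn (fun t : ℝ => f t * Real.exp (-x * t)) (Set.Ioi 0) ∧
  MeasureTheory.MemLp (fun t : ℝ => f t * Real.exp (-x * t)) 2
    (MeasureTheory.volume.restrict (Set.Ioi 0))



open scoped Real ComplexConjugate Topology ENNReal

namespace LaplacePlancherelAux

variable {g : ℝ → ℂ}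

noncomputable def FT (g : ℝ → ℂ) (y : ℝ) : ℂ :=
  ∫ t : ℝ, g t * Complex.exp (-(Complex.I * y) * t)

noncomputable def K (ε u : ℝ) : ℝ :=
  Real.sqrt (Real.pi / ε) * Real.exp (-(1 / (4 * ε)) * u ^ 2)

noncomputable def corr (g : ℝ → ℂ) (u : ℝ) : ℂ :=
  ∫ t : ℝ, g t * conj (g (t - u))

lemma norm_exp_aux (y t : ℝ) : ‖Complex.exp (-(Complex.I * y) * t)‖ = 1 := by
  have h : (-(Complex.I * y) * t : ℂ) = ((-(y * t) : ℝ) : ℂ) * Complex.I := by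
    push_cast; ring
  rw [h, Complex.norm_exp_ofReal_mul_I]

lemma FT_norm_le (g : ℝ → ℂ) (y : ℝ) : ‖FT g y‖ ≤ ∫ t : ℝ, ‖g t‖ := by
  refine (norm_integral_le_integral_norm _).trans_eq ?_
  refine integral_congr_ae (Eventually.of_forall fun t => ?_)
  simp only [norm_mul, norm_exp_aux, mul_one]

lemma FT_continuous (g : ℝ → ℂ) (hgm : Measurable g) (h1 : Integrable g) :
    Continuous (FT g) := by
  refine continuous_of_dominated (bound := fun t => ‖g t‖) ?_ ?_ h1.norm ?_
  · intro y
    exact (hgm.mul (by fun_prop)).aestronglyMeasurable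
  · intro y
    refine Eventually.of_forall fun t => ?_
    rw [norm_mul, norm_exp_aux, mul_one]
  · refine Eventually.of_forall fun t => ?_
    fun_prop

lemma K_nonneg (ε u : ℝ) : 0 ≤ K ε u :=
  mul_nonneg (Real.sqrt_nonneg _) (Real.exp_pos _).le

lemma K_integrable {ε : ℝ} (hε : 0 < ε) : Integrable (K ε) :=
  (integrable_exp_neg_mul_sq (by positivity : (0:ℝ) < 1 / (4 * ε))).const_mul _

lemma gauss_int {ε : ℝ} (hε : 0 < ε) (a : ℝ) :
    ∫ y : ℝ, ((Real.exp (-(ε * y ^ 2)) : ℝ) : ℂ) * Complex.exp (-(Complex.I * y) * a)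
      = ((K ε a : ℝ) : ℂ) := by
  have h1 : ∀ y : ℝ, ((Real.exp (-(ε * y ^ 2)) : ℝ) : ℂ) * Complex.exp (-(Complex.I * y) * a)
      = Complex.exp ((-(ε : ℂ)) * y ^ 2 + (-(Complex.I * a)) * y + 0) := by
    intro y
    rw [Complex.ofReal_exp, ← Complex.exp_add]
    push_cast; ring_nf
  simp_rw [h1]
  rw [integral_cexp_quadratic (by simpa using hε : (-(ε:ℂ)).re < 0)]
  have h2 : (0 : ℂ) - (-(Complex.I * a)) ^ 2 / (4 * (-(ε : ℂ))) = ((-(1 / (4 * ε) * a ^ 2) : ℝ) : ℂ) := by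
    have : (ε : ℂ) ≠ 0 := by exact_mod_cast hε.ne'
    push_cast
    field_simp
    ring_nf
    rw [Complex.I_sq]
    ring
  rw [h2]
  have h3 : ((Real.pi / ε : ℝ) : ℂ) ^ (1 / 2 : ℂ) = ((Real.sqrt (Real.pi / ε) : ℝ) : ℂ) := by
    rw [Real.sqrt_eq_rpow, Complex.ofReal_cpow (by positivity)]
    norm_num
  have h4 : (↑Real.pi / -(-(ε:ℂ))) = ((Real.pi / ε : ℝ) : ℂ) := by push_cast; ring
  rw [h4, h3, ← Complex.ofReal_exp, ← Complex.ofReal_mul]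
  unfold K
  norm_num

noncomputable def shiftCM (u : ℝ) : C(ℝ, ℝ) :=
  ContinuousMap.curry ⟨fun p : ℝ × ℝ => p.2 - p.1, by fun_prop⟩ u

lemma shiftCM_apply (u t : ℝ) : shiftCM u t = t - u := rfl

lemma shiftCM_continuous : Continuous shiftCM :=
  (ContinuousMap.curry ⟨fun p : ℝ × ℝ => p.2 - p.1, by fun_prop⟩).continuous

lemma shiftCM_mp (u : ℝ) : MeasurePreserving (shiftCM u) volume volume := by
  have h : ⇑(shiftCM u) = fun t : ℝ => t + (-u) := by
    funext t; simp [shiftCM_apply, sub_eq_add_neg]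
  rw [h]
  exact measurePreserving_add_right volume (-u)

variable {g : ℝ → ℂ}

noncomputable def trLp (h2 : MemLp g 2 (volume : Measure ℝ)) (u : ℝ) :
    Lp ℂ 2 (volume : Measure ℝ) :=
  Lp.compMeasurePreserving (shiftCM u) (shiftCM_mp u) (h2.toLp g)

lemma trLp_coeFn (h2 : MemLp g 2 (volume : Measure ℝ)) (u : ℝ) :
    trLp h2 u =ᵐ[volume] fun t => g (t - u) := by
  refine (Lp.coeFn_compMeasurePreserving _ _).trans ?_
  have h : ∀ᵐ t : ℝ ∂volume, (h2.toLp g) (t - u) = g (t - u) := by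
    exact (shiftCM_mp u).quasiMeasurePreserving.ae_eq_comp h2.coeFn_toLp
  filter_upwards [h] with t ht
  simpa [shiftCM_apply] using ht

lemma corr_eq_inner (h2 : MemLp g 2 (volume : Measure ℝ)) (u : ℝ) :
    corr g u = (inner ℂ (trLp h2 u) (h2.toLp g) : ℂ) := by
  rw [L2.inner_def]
  refine integral_congr_ae ?_
  filter_upwards [trLp_coeFn h2 u, h2.coeFn_toLp] with t h1 h2'
  simp only [RCLike.inner_apply, h1, h2']

lemma corr_continuous (h2 : MemLp g 2 (volume : Measure ℝ)) : Continuous (corr g) := by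
  have hc : Continuous fun u : ℝ => trLp h2 u := by
    exact Continuous.compMeasurePreservingLp continuous_const shiftCM_continuous
      shiftCM_mp (by norm_num)
  have : Continuous fun u : ℝ => (inner ℂ (trLp h2 u) (h2.toLp g) : ℂ) := by
    exact hc.inner continuous_const
  refine this.congr fun u => (corr_eq_inner h2 u).symm

lemma corr_norm_le (h2 : MemLp g 2 (volume : Measure ℝ)) (u : ℝ) :
    ‖corr g u‖ ≤ ‖h2.toLp g‖ ^ 2 := by
  rw [corr_eq_inner h2 u]
  refine (norm_inner_le_norm _ _).trans_eq ?_
  rw [show ‖trLp h2 u‖ = ‖h2.toLp g‖ from Lp.norm_compMeasurePreserving _ _, sq]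

lemma corr_zero (g : ℝ → ℂ) : corr g 0 = ((∫ t : ℝ, ‖g t‖ ^ 2 : ℝ) : ℂ) := by
  unfold corr
  have h : ∀ t : ℝ, g t * conj (g (t - 0)) = ((‖g t‖ ^ 2 : ℝ) : ℂ) := by
    intro t
    simp [Complex.mul_conj, Complex.normSq_eq_norm_sq]
  simp_rw [h]
  exact integral_ofReal

lemma integrable_mul_translate (h2 : MemLp g 2 (volume : Measure ℝ)) (u : ℝ) :
    Integrable (fun t : ℝ => g t * conj (g (t - u))) := by
  have h := L2.integrable_inner (𝕜 := ℂ) (trLp h2 u) (h2.toLp g)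
  refine h.congr ?_
  filter_upwards [trLp_coeFn h2 u, h2.coeFn_toLp] with t h1 h2'
  simp only [RCLike.inner_apply, h1, h2']

lemma K_continuous (ε : ℝ) : Continuous (K ε) := by
  unfold K; fun_prop

noncomputable def PsiLp (h2 : MemLp g 2 (volume : Measure ℝ)) : Lp ℝ 2 (volume : Measure ℝ) :=
  (h2.norm).toLp _

noncomputable def trLpR (h2 : MemLp g 2 (volume : Measure ℝ)) (u : ℝ) :
    Lp ℝ 2 (volume : Measure ℝ) :=
  Lp.compMeasurePreserving (shiftCM u) (shiftCM_mp u) (PsiLp h2)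

lemma trLpR_coeFn (h2 : MemLp g 2 (volume : Measure ℝ)) (u : ℝ) :
    trLpR h2 u =ᵐ[volume] fun t => ‖g (t - u)‖ := by
  refine (Lp.coeFn_compMeasurePreserving _ _).trans ?_
  have h : ∀ᵐ t : ℝ ∂volume, ((h2.norm).toLp _) (t - u) = ‖g (t - u)‖ := by
    exact (shiftCM_mp u).quasiMeasurePreserving.ae_eq_comp (h2.norm).coeFn_toLp
  filter_upwards [h] with t ht
  simpa [shiftCM_apply, PsiLp] using ht

noncomputable def innR (h2 : MemLp g 2 (volume : Measure ℝ)) (u : ℝ) : ℝ :=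
  inner ℝ (trLpR h2 u) (PsiLp h2)

lemma innR_eq (h2 : MemLp g 2 (volume : Measure ℝ)) (u : ℝ) :
    innR h2 u = ∫ t : ℝ, ‖g t‖ * ‖g (t - u)‖ := by
  unfold innR
  rw [L2.inner_def]
  refine integral_congr_ae ?_
  filter_upwards [trLpR_coeFn h2 u, (h2.norm).coeFn_toLp] with t h1 h2'
  simp only [RCLike.inner_apply, h1]
  show (PsiLp h2) t * starRingEnd ℝ _ = _
  rw [starRingEnd_apply, star_trivial]
  have : (PsiLp h2) t = ‖g t‖ := h2'
  rw [this]

lemma innR_continuous (h2 : MemLp g 2 (volume : Measure ℝ)) : Continuous (innR h2) := by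
  have hc : Continuous fun u : ℝ => trLpR h2 u :=
    Continuous.compMeasurePreservingLp continuous_const shiftCM_continuous shiftCM_mp (by norm_num)
  exact hc.inner continuous_const

lemma innR_bound (h2 : MemLp g 2 (volume : Measure ℝ)) (u : ℝ) :
    |innR h2 u| ≤ ‖PsiLp h2‖ ^ 2 := by
  have := norm_inner_le_norm (𝕜 := ℝ) (trLpR h2 u) (PsiLp h2)
  rw [show ‖trLpR h2 u‖ = ‖PsiLp h2‖ from Lp.norm_compMeasurePreserving _ _] at this
  simpa [sq, Real.norm_eq_abs, innR] using this

lemma fubini2_integrable (hgm : Measurable g) (h2 : MemLp g 2 (volume : Measure ℝ))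
    {ε : ℝ} (hε : 0 < ε) :
    Integrable (fun p : ℝ × ℝ => g p.1 * (conj (g (p.1 - p.2)) * ((K ε p.2 : ℝ) : ℂ)))
      ((volume : Measure ℝ).prod (volume : Measure ℝ)) := by
  have hmeas : AEStronglyMeasurable
      (fun p : ℝ × ℝ => g p.1 * (conj (g (p.1 - p.2)) * ((K ε p.2 : ℝ) : ℂ)))
      ((volume : Measure ℝ).prod volume) := by
    refine Measurable.aestronglyMeasurable ?_
    have h1 : Measurable fun p : ℝ × ℝ => g p.1 := hgm.comp measurable_fst
    have h2' : Measurable fun p : ℝ × ℝ => conj (g (p.1 - p.2)) :=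
      Complex.continuous_conj.measurable.comp (hgm.comp (measurable_fst.sub measurable_snd))
    have h3 : Measurable fun p : ℝ × ℝ => ((K ε p.2 : ℝ) : ℂ) :=
      Complex.measurable_ofReal.comp ((K_continuous ε).measurable.comp measurable_snd)
    exact h1.mul (h2'.mul h3)
  rw [integrable_prod_iff' hmeas]
  constructor
  · refine Eventually.of_forall fun u => ?_
    have := (integrable_mul_translate h2 u).mul_const ((K ε u : ℝ) : ℂ)
    refine this.congr (Eventually.of_forall fun t => ?_)
    ring
  · have heq : (fun u : ℝ => ∫ t : ℝ, ‖g t * (conj (g (t - u)) * ((K ε u : ℝ) : ℂ))‖)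
        = fun u : ℝ => innR h2 u * K ε u := by
      funext u
      rw [innR_eq]
      rw [← integral_mul_const]
      refine integral_congr_ae (Eventually.of_forall fun t => ?_)
      simp only [norm_mul, RCLike.norm_conj, Complex.norm_real, Real.norm_eq_abs,
        _root_.abs_of_nonneg (K_nonneg ε u)]
      ring
    rw [heq]
    refine Integrable.mono' (((K_integrable hε).const_mul (‖PsiLp h2‖ ^ 2)))
      ((innR_continuous h2).mul (K_continuous ε)).aestronglyMeasurable
      (Eventually.of_forall fun u => ?_)
    rw [Real.norm_eq_abs, abs_mul, _root_.abs_of_nonneg (K_nonneg ε u)]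
    exact mul_le_mul_of_nonneg_right (innR_bound h2 u) (K_nonneg ε u)

lemma step5 (hgm : Measurable g) (h2 : MemLp g 2 (volume : Measure ℝ)) {ε : ℝ} (hε : 0 < ε) :
    ∫ t : ℝ, g t * ∫ u : ℝ, conj (g (t - u)) * ((K ε u : ℝ) : ℂ)
      = ∫ u : ℝ, ((K ε u : ℝ) : ℂ) * corr g u := by
  simp_rw [← integral_const_mul]
  rw [integral_integral_swap (fubini2_integrable hgm h2 hε)]
  refine integral_congr_ae (Eventually.of_forall fun u => ?_)
  unfold corr
  show _ = ((K ε u : ℝ) : ℂ) * ∫ t : ℝ, g t * conj (g (t - u))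
  rw [← integral_const_mul]
  refine integral_congr_ae (Eventually.of_forall fun t => ?_)
  ring

lemma norm_exp_aux' (y s : ℝ) : ‖Complex.exp ((Complex.I * y) * s)‖ = 1 := by
  have h : ((Complex.I * y) * s : ℂ) = ((y * s : ℝ) : ℂ) * Complex.I := by push_cast; ring
  rw [h, Complex.norm_exp_ofReal_mul_I]

lemma gauss_integrable {ε : ℝ} (hε : 0 < ε) :
    Integrable (fun y : ℝ => Real.exp (-(ε * y ^ 2))) := by
  have := integrable_exp_neg_mul_sq hε
  refine this.congr (Eventually.of_forall fun y => ?_)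
  ring_nf

lemma conj_FT (g : ℝ → ℂ) (y : ℝ) :
    conj (FT g y) = ∫ s : ℝ, conj (g s) * Complex.exp ((Complex.I * y) * s) := by
  rw [FT, ← integral_conj]
  refine integral_congr_ae (Eventually.of_forall fun s => ?_)
  dsimp only
  rw [map_mul, ← Complex.exp_conj]
  congr 1
  simp only [map_mul, map_neg, Complex.conj_I, Complex.conj_ofReal]
  ring

/-- Inner swap: for fixed `t`. -/
lemma step3 (hgm : Measurable g) (h1 : Integrable g) {ε : ℝ} (hε : 0 < ε) (t : ℝ) :
    ∫ y : ℝ, ((Real.exp (-(ε * y ^ 2)) : ℝ) : ℂ) * Complex.exp (-(Complex.I * y) * t)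
        * conj (FT g y)
      = ∫ s : ℝ, conj (g s) * ((K ε (t - s) : ℝ) : ℂ) := by
  have hQint : Integrable (fun p : ℝ × ℝ =>
      ((Real.exp (-(ε * p.1 ^ 2)) : ℝ) : ℂ) * Complex.exp (-(Complex.I * p.1) * t)
        * (conj (g p.2) * Complex.exp ((Complex.I * p.1) * p.2)))
      ((volume : Measure ℝ).prod volume) := by
    have hbound : Integrable (fun p : ℝ × ℝ => Real.exp (-(ε * p.1 ^ 2)) * ‖g p.2‖)
        ((volume : Measure ℝ).prod volume) := (gauss_integrable hε).mul_prod h1.norm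
    refine hbound.mono' ?_ (Eventually.of_forall fun p => ?_)
    · refine Measurable.aestronglyMeasurable ?_
      have hm1 : Measurable fun p : ℝ × ℝ => conj (g p.2) :=
        Complex.continuous_conj.measurable.comp (hgm.comp measurable_snd)
      fun_prop
    · simp only [norm_mul, norm_exp_aux, norm_exp_aux', Complex.norm_real, Real.norm_eq_abs,
        RCLike.norm_conj, _root_.abs_of_nonneg (Real.exp_pos _).le, mul_one, one_mul]
      exact le_refl _
  calc
    ∫ y : ℝ, ((Real.exp (-(ε * y ^ 2)) : ℝ) : ℂ) * Complex.exp (-(Complex.I * y) * t)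
        * conj (FT g y)
        = ∫ y : ℝ, ∫ s : ℝ, ((Real.exp (-(ε * y ^ 2)) : ℝ) : ℂ)
            * Complex.exp (-(Complex.I * y) * t)
            * (conj (g s) * Complex.exp ((Complex.I * y) * s)) := by
        refine integral_congr_ae (Eventually.of_forall fun y => ?_)
        dsimp only
        rw [conj_FT, ← integral_const_mul]
    _ = ∫ s : ℝ, ∫ y : ℝ, ((Real.exp (-(ε * y ^ 2)) : ℝ) : ℂ)
            * Complex.exp (-(Complex.I * y) * t)
            * (conj (g s) * Complex.exp ((Complex.I * y) * s)) :=
        integral_integral_swap hQint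
    _ = ∫ s : ℝ, conj (g s) * ((K ε (t - s) : ℝ) : ℂ) := by
        refine integral_congr_ae (Eventually.of_forall fun s => ?_)
        dsimp only
        have hrw : ∀ y : ℝ, ((Real.exp (-(ε * y ^ 2)) : ℝ) : ℂ)
            * Complex.exp (-(Complex.I * y) * t)
            * (conj (g s) * Complex.exp ((Complex.I * y) * s))
            = conj (g s) * (((Real.exp (-(ε * y ^ 2)) : ℝ) : ℂ)
              * Complex.exp (-(Complex.I * y) * ((t - s : ℝ) : ℂ))) := by
          intro y
          rw [show Complex.exp (-(Complex.I * y) * ((t - s : ℝ) : ℂ))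
              = Complex.exp (-(Complex.I * y) * t) * Complex.exp ((Complex.I * y) * s) by
            rw [← Complex.exp_add]; congr 1; push_cast; ring]
          ring
        simp_rw [hrw]
        rw [integral_const_mul, gauss_int hε]

lemma step4 {ε : ℝ} (t : ℝ) :
    ∫ s : ℝ, conj (g s) * ((K ε (t - s) : ℝ) : ℂ)
      = ∫ u : ℝ, conj (g (t - u)) * ((K ε u : ℝ) : ℂ) := by
  have h := integral_sub_left_eq_self
    (fun v : ℝ => conj (g (t - v)) * ((K ε v : ℝ) : ℂ)) volume t
  simp only [sub_sub_cancel] at h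
  exact h

/-- Per-ε key identity. -/
lemma key (hgm : Measurable g) (h1 : Integrable g) (h2 : MemLp g 2 (volume : Measure ℝ))
    {ε : ℝ} (hε : 0 < ε) :
    ∫ y : ℝ, ((Real.exp (-(ε * y ^ 2)) : ℝ) : ℂ) * (FT g y * conj (FT g y))
      = ∫ u : ℝ, ((K ε u : ℝ) : ℂ) * corr g u := by
  have hFTc : Continuous (FT g) := FT_continuous g hgm h1
  set M : ℝ := ∫ t : ℝ, ‖g t‖ with hM
  have hM0 : 0 ≤ M := integral_nonneg fun t => norm_nonneg _
  have hPint : Integrable (fun p : ℝ × ℝ =>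
      g p.2 * (((Real.exp (-(ε * p.1 ^ 2)) : ℝ) : ℂ)
        * Complex.exp (-(Complex.I * p.1) * p.2) * conj (FT g p.1)))
      ((volume : Measure ℝ).prod volume) := by
    have hbound : Integrable (fun p : ℝ × ℝ => (Real.exp (-(ε * p.1 ^ 2)) * M) * ‖g p.2‖)
        ((volume : Measure ℝ).prod volume) :=
      ((gauss_integrable hε).mul_const M).mul_prod h1.norm
    refine hbound.mono' ?_ (Eventually.of_forall fun p => ?_)
    · refine Measurable.aestronglyMeasurable ?_
      have hm1 : Measurable fun p : ℝ × ℝ => g p.2 := hgm.comp measurable_snd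
      have hm2 : Measurable fun p : ℝ × ℝ => conj (FT g p.1) :=
        Complex.continuous_conj.measurable.comp (hFTc.measurable.comp measurable_fst)
      fun_prop
    · simp only [norm_mul, norm_exp_aux, Complex.norm_real, Real.norm_eq_abs,
        RCLike.norm_conj, _root_.abs_of_nonneg (Real.exp_pos _).le, mul_one, one_mul]
      have := FT_norm_le g p.1
      calc ‖g p.2‖ * (Real.exp (-(ε * p.1 ^ 2)) * ‖FT g p.1‖)
          ≤ ‖g p.2‖ * (Real.exp (-(ε * p.1 ^ 2)) * M) := by
            refine mul_le_mul_of_nonneg_left ?_ (norm_nonneg _)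
            exact mul_le_mul_of_nonneg_left (by rw [hM]; exact this) (Real.exp_pos _).le
        _ = Real.exp (-(ε * p.1 ^ 2)) * M * ‖g p.2‖ := by ring
  calc
    ∫ y : ℝ, ((Real.exp (-(ε * y ^ 2)) : ℝ) : ℂ) * (FT g y * conj (FT g y))
        = ∫ y : ℝ, ∫ t : ℝ, g t * (((Real.exp (-(ε * y ^ 2)) : ℝ) : ℂ)
            * Complex.exp (-(Complex.I * y) * t) * conj (FT g y)) := by
        refine integral_congr_ae (Eventually.of_forall fun y => ?_)
        dsimp only
        have e1 : FT g y * conj (FT g y)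
            = ∫ t : ℝ, g t * Complex.exp (-(Complex.I * y) * t) * conj (FT g y) := by
          rw [integral_mul_const, FT]
        rw [e1, ← integral_const_mul]
        refine integral_congr_ae (Eventually.of_forall fun t => ?_)
        dsimp only
        ring
    _ = ∫ t : ℝ, ∫ y : ℝ, g t * (((Real.exp (-(ε * y ^ 2)) : ℝ) : ℂ)
            * Complex.exp (-(Complex.I * y) * t) * conj (FT g y)) :=
        integral_integral_swap hPint
    _ = ∫ t : ℝ, g t * ∫ s : ℝ, conj (g s) * ((K ε (t - s) : ℝ) : ℂ) := by
        refine integral_congr_ae (Eventually.of_forall fun t => ?_)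
        dsimp only
        rw [integral_const_mul, step3 hgm h1 hε t]
    _ = ∫ t : ℝ, g t * ∫ u : ℝ, conj (g (t - u)) * ((K ε u : ℝ) : ℂ) := by
        refine integral_congr_ae (Eventually.of_forall fun t => ?_)
        dsimp only
        rw [step4]
    _ = ∫ u : ℝ, ((K ε u : ℝ) : ℂ) * corr g u := step5 hgm h2 hε

lemma K_scale {ε : ℝ} (hε : 0 < ε) (v : ℝ) :
    (2 * Real.sqrt ε) * K ε ((2 * Real.sqrt ε) * v)
      = 2 * Real.sqrt Real.pi * Real.exp (-v ^ 2) := by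
  have hsq : (2 * Real.sqrt ε) ^ 2 = 4 * ε := by
    rw [mul_pow, Real.sq_sqrt hε.le]; ring
  have hexp : -(1 / (4 * ε)) * ((2 * Real.sqrt ε) * v) ^ 2 = -v ^ 2 := by
    rw [mul_pow, hsq]; field_simp
  have hpre : (2 * Real.sqrt ε) * Real.sqrt (Real.pi / ε) = 2 * Real.sqrt Real.pi := by
    rw [mul_assoc, ← Real.sqrt_mul hε.le]
    congr 2
    field_simp
  unfold K
  rw [hexp, ← mul_assoc, hpre]

lemma sub_int {ε : ℝ} (hε : 0 < ε) :
    ∫ u : ℝ, ((K ε u : ℝ) : ℂ) * corr g u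
      = ∫ v : ℝ, ((2 * Real.sqrt Real.pi * Real.exp (-v ^ 2) : ℝ) : ℂ)
          * corr g ((2 * Real.sqrt ε) * v) := by
  set c : ℝ := 2 * Real.sqrt ε with hc
  have hc0 : 0 < c := by positivity
  have h := MeasureTheory.Measure.integral_comp_mul_left
    (fun u : ℝ => ((K ε u : ℝ) : ℂ) * corr g u) c
  rw [abs_of_pos (inv_pos.mpr hc0)] at h
  have h2 : (∫ u : ℝ, ((K ε u : ℝ) : ℂ) * corr g u)
      = c • ∫ x : ℝ, ((K ε (c * x) : ℝ) : ℂ) * corr g (c * x) := by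
    rw [h, smul_smul, mul_inv_cancel₀ hc0.ne', one_smul]
  rw [h2, ← integral_smul]
  refine integral_congr_ae (Eventually.of_forall fun v => ?_)
  dsimp only
  rw [Complex.real_smul, ← mul_assoc, ← Complex.ofReal_mul, K_scale hε v]

noncomputable def epsn (n : ℕ) : ℝ := 1 / (n + 1)

lemma epsn_pos (n : ℕ) : 0 < epsn n := by unfold epsn; positivity

lemma epsn_tendsto : Tendsto epsn atTop (𝓝 0) :=
  tendsto_one_div_add_atTop_nhds_zero_nat

lemma epsn_antitone : Antitone epsn := by
  intro n m h
  unfold epsn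
  gcongr

lemma tendsto_J (h2 : MemLp g 2 (volume : Measure ℝ)) :
    Tendsto (fun n : ℕ => ∫ u : ℝ, ((K (epsn n) u : ℝ) : ℂ) * corr g u) atTop
      (𝓝 (((2 * Real.pi : ℝ) : ℂ) * corr g 0)) := by
  set B : ℝ := ‖h2.toLp g‖ ^ 2 with hB
  have hB0 : 0 ≤ B := by positivity
  have hrw : ∀ n : ℕ, ∫ u : ℝ, ((K (epsn n) u : ℝ) : ℂ) * corr g u
      = ∫ v : ℝ, ((2 * Real.sqrt Real.pi * Real.exp (-v ^ 2) : ℝ) : ℂ)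
          * corr g ((2 * Real.sqrt (epsn n)) * v) := fun n => sub_int (epsn_pos n)
  simp_rw [hrw]
  have hreal : ∫ v : ℝ, 2 * Real.sqrt Real.pi * Real.exp (-v ^ 2) = 2 * Real.pi := by
    rw [integral_const_mul]
    have hg1 : ∫ v : ℝ, Real.exp (-v ^ 2) = Real.sqrt Real.pi := by
      have h := integral_gaussian 1
      simp only [neg_mul, one_mul, div_one] at h
      exact h
    rw [hg1, mul_assoc, Real.mul_self_sqrt Real.pi_pos.le]
  have hlim : (∫ v : ℝ, ((2 * Real.sqrt Real.pi * Real.exp (-v ^ 2) : ℝ) : ℂ) * corr g 0)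
      = ((2 * Real.pi : ℝ) : ℂ) * corr g 0 := by
    rw [integral_mul_const]
    congr 1
    calc (∫ v : ℝ, ((2 * Real.sqrt Real.pi * Real.exp (-v ^ 2) : ℝ) : ℂ))
        = ((∫ v : ℝ, 2 * Real.sqrt Real.pi * Real.exp (-v ^ 2) : ℝ) : ℂ) := integral_ofReal
      _ = ((2 * Real.pi : ℝ) : ℂ) := by rw [hreal]
  rw [← hlim]
  refine tendsto_integral_of_dominated_convergence
    (bound := fun v => 2 * Real.sqrt Real.pi * Real.exp (-v ^ 2) * B) ?_ ?_ ?_ ?_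
  · intro n
    refine Continuous.aestronglyMeasurable ?_
    have : Continuous fun v : ℝ => corr g (2 * Real.sqrt (epsn n) * v) :=
      (corr_continuous h2).comp (by fun_prop)
    fun_prop
  · have : Integrable (fun v : ℝ => Real.exp (-(1 * v ^ 2))) := gauss_integrable one_pos
    have h' : Integrable (fun v : ℝ => Real.exp (-v ^ 2)) := by
      refine this.congr (Eventually.of_forall fun v => ?_); ring_nf
    exact (h'.const_mul _).mul_const _
  · intro n
    refine Eventually.of_forall fun v => ?_
    rw [norm_mul, Complex.norm_real, Real.norm_eq_abs, _root_.abs_of_nonneg (by positivity)]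
    exact mul_le_mul_of_nonneg_left (corr_norm_le h2 _) (by positivity)
  · refine Eventually.of_forall fun v => ?_
    refine Tendsto.const_mul _ ?_
    refine ((corr_continuous h2).tendsto 0).comp ?_
    have h0 : Tendsto (fun n : ℕ => 2 * Real.sqrt (epsn n) * v) atTop (𝓝 (2 * Real.sqrt 0 * v)) := by
      refine Tendsto.mul_const v (Tendsto.const_mul 2 ?_)
      exact (Real.continuous_sqrt.tendsto 0).comp epsn_tendsto
    simpa using h0

theorem plancherel_aux (hgm : Measurable g) (h1 : Integrable g)
    (h2 : MemLp g 2 (volume : Measure ℝ)) :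
    (∫ y : ℝ, ‖FT g y‖ ^ 2) = 2 * Real.pi * ∫ t : ℝ, ‖g t‖ ^ 2 := by
  set C : ℝ := ∫ t : ℝ, ‖g t‖ ^ 2 with hC
  have hC0 : 0 ≤ C := integral_nonneg fun t => sq_nonneg _
  have hFTc : Continuous (FT g) := FT_continuous g hgm h1
  set M : ℝ := ∫ t : ℝ, ‖g t‖ with hM
  have hM0 : 0 ≤ M := integral_nonneg fun t => norm_nonneg _
  -- real regularized integrals
  set Ir : ℕ → ℝ := fun n => ∫ y : ℝ, Real.exp (-(epsn n * y ^ 2)) * ‖FT g y‖ ^ 2 with hIr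
  have hIr_int : ∀ n, Integrable (fun y : ℝ => Real.exp (-(epsn n * y ^ 2)) * ‖FT g y‖ ^ 2) := by
    intro n
    refine Integrable.mono' (((gauss_integrable (epsn_pos n)).mul_const (M ^ 2))) ?_
      (Eventually.of_forall fun y => ?_)
    · exact ((Continuous.mul (by fun_prop) ((hFTc.norm).pow 2))).aestronglyMeasurable
    · rw [Real.norm_eq_abs, _root_.abs_of_nonneg (by positivity)]
      refine mul_le_mul_of_nonneg_left ?_ (Real.exp_pos _).le
      exact pow_le_pow_left₀ (norm_nonneg _) (FT_norm_le g y) 2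
  -- complex value of the regularized integrals
  have hIr_eq : ∀ n, ((Ir n : ℝ) : ℂ) = ∫ u : ℝ, ((K (epsn n) u : ℝ) : ℂ) * corr g u := by
    intro n
    rw [← key hgm h1 h2 (epsn_pos n)]
    have e0 : ((Ir n : ℝ) : ℂ)
        = ∫ y : ℝ, ((Real.exp (-(epsn n * y ^ 2)) * ‖FT g y‖ ^ 2 : ℝ) : ℂ) :=
      integral_ofReal.symm
    rw [e0]
    refine integral_congr_ae (Eventually.of_forall fun y => ?_)
    dsimp only
    rw [Complex.ofReal_mul, Complex.mul_conj]
    congr 1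
    rw [Complex.normSq_eq_norm_sq]
  -- real convergence
  have hIr_tendsto : Tendsto Ir atTop (𝓝 (2 * Real.pi * C)) := by
    have h1' : Tendsto (fun n => ((Ir n : ℝ) : ℂ)) atTop (𝓝 (((2 * Real.pi : ℝ) : ℂ) * corr g 0)) := by
      simp_rw [hIr_eq]
      exact tendsto_J h2
    rw [corr_zero, ← Complex.ofReal_mul] at h1'
    have h2' := (Complex.continuous_re.tendsto _).comp h1'
    simpa [hC, Function.comp_def] using h2'
  -- monotone convergence
  have hmono : Monotone fun n : ℕ => fun y : ℝ =>
      ENNReal.ofReal (Real.exp (-(epsn n * y ^ 2)) * ‖FT g y‖ ^ 2) := by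
    intro n m hnm
    intro y
    refine ENNReal.ofReal_le_ofReal ?_
    refine mul_le_mul_of_nonneg_right ?_ (sq_nonneg _)
    refine Real.exp_le_exp.mpr ?_
    have := epsn_antitone hnm
    nlinarith [sq_nonneg y]
  have hlim_pt : ∀ y : ℝ, Tendsto (fun n : ℕ =>
      ENNReal.ofReal (Real.exp (-(epsn n * y ^ 2)) * ‖FT g y‖ ^ 2)) atTop
      (𝓝 (ENNReal.ofReal (‖FT g y‖ ^ 2))) := by
    intro y
    refine (ENNReal.continuous_ofReal.tendsto _).comp ?_
    have : Tendsto (fun n : ℕ => Real.exp (-(epsn n * y ^ 2))) atTop (𝓝 1) := by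
      have h0 : Tendsto (fun n : ℕ => -(epsn n * y ^ 2)) atTop (𝓝 0) := by
        have := epsn_tendsto.mul_const (y ^ 2)
        simpa using this.neg
      simpa [Function.comp_def] using (Real.continuous_exp.tendsto 0).comp h0
    have := this.mul_const (‖FT g y‖ ^ 2)
    simpa using this
  have hsup_eq : ∀ y : ℝ, (⨆ n : ℕ, ENNReal.ofReal (Real.exp (-(epsn n * y ^ 2)) * ‖FT g y‖ ^ 2))
      = ENNReal.ofReal (‖FT g y‖ ^ 2) := by
    intro y
    refine tendsto_nhds_unique ?_ (hlim_pt y)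
    exact tendsto_atTop_iSup fun n m h => hmono h y
  have hlint : ∫⁻ y : ℝ, ENNReal.ofReal (‖FT g y‖ ^ 2) = ENNReal.ofReal (2 * Real.pi * C) := by
    have hmct := lintegral_iSup (μ := (volume : Measure ℝ))
      (f := fun n : ℕ => fun y : ℝ => ENNReal.ofReal (Real.exp (-(epsn n * y ^ 2)) * ‖FT g y‖ ^ 2))
      (fun n => ENNReal.measurable_ofReal.comp
        ((Continuous.mul (by fun_prop) ((hFTc.norm).pow 2)).measurable)) hmono
    have heq1 : ∫⁻ y : ℝ, ENNReal.ofReal (‖FT g y‖ ^ 2)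
        = ⨆ n, ∫⁻ y : ℝ, ENNReal.ofReal (Real.exp (-(epsn n * y ^ 2)) * ‖FT g y‖ ^ 2) := by
      rw [← hmct]
      refine lintegral_congr fun y => (hsup_eq y).symm
    rw [heq1]
    have heq2 : ∀ n, ∫⁻ y : ℝ, ENNReal.ofReal (Real.exp (-(epsn n * y ^ 2)) * ‖FT g y‖ ^ 2)
        = ENNReal.ofReal (Ir n) := by
      intro n
      rw [← ofReal_integral_eq_lintegral_ofReal (hIr_int n)
        (Eventually.of_forall fun y => by positivity)]
    simp_rw [heq2]
    refine tendsto_nhds_unique ?_ (ENNReal.tendsto_ofReal hIr_tendsto)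
    refine tendsto_atTop_iSup ?_
    intro n m h
    refine ENNReal.ofReal_le_ofReal ?_
    refine integral_mono (hIr_int n) (hIr_int m) fun y => ?_
    exact (ENNReal.ofReal_le_ofReal_iff (by positivity)).mp (hmono h y)
  -- conclude
  have hint : Integrable (fun y : ℝ => ‖FT g y‖ ^ 2) := by
    refine ⟨((hFTc.norm).pow 2).aestronglyMeasurable, ?_⟩
    rw [hasFiniteIntegral_iff_ofReal (Eventually.of_forall fun y => by positivity)]
    rw [hlint]
    exact ENNReal.ofReal_lt_top
  rw [integral_eq_lintegral_of_nonneg_ae (f := fun y => ‖FT g y‖ ^ 2) (Eventually.of_forall fun y => by positivity)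
    ((hFTc.norm).pow 2).aestronglyMeasurable, hlint, ENNReal.toReal_ofReal (by positivity)]


end LaplacePlancherelAux

open LaplacePlancherelAux

/-- Plancherel theorem for the Laplace transform:
`(1/(2π)) ∫_{-∞}^∞ |𝓛{f}(x+iy)|² dy = ∫₀^∞ e^{-2xt} |f(t)|² dt`. -/
theorem laplace_plancherel (f : ℝ → ℂ) (x : ℝ) (hx : 0 ≤ x) (hf : IsLaplacePego f x) :
    (1 / (2 * Real.pi)) *
        ∫ y : ℝ, ‖LaplaceTransform f ((x : ℂ) + Complex.I * y)‖ ^ 2 =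
      ∫ t in Set.Ioi (0 : ℝ), Real.exp (-(2 * x * t)) * ‖f t‖ ^ 2 := by

  obtain ⟨hfm, hfi, hfl2⟩ := hf
  set g : ℝ → ℂ := Set.indicator (Set.Ioi 0)
    (fun t => f t * ((Real.exp (-x * t) : ℝ) : ℂ)) with hg
  have hgm : Measurable g :=
    Measurable.indicator (by fun_prop) measurableSet_Ioi
  have h1 : Integrable g := (integrable_indicator_iff measurableSet_Ioi).2 hfi
  have h2 : MemLp g 2 (volume : Measure ℝ) :=
    (memLp_indicator_iff_restrict measurableSet_Ioi).2 hfl2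
  have hLT : ∀ y : ℝ, LaplaceTransform f ((x : ℂ) + Complex.I * y) = FT g y := by
    intro y
    rw [LaplaceTransform, FT, ← integral_indicator measurableSet_Ioi]
    refine integral_congr_ae (Eventually.of_forall fun t => ?_)
    dsimp only
    by_cases ht : t ∈ Set.Ioi (0 : ℝ)
    · rw [Set.indicator_of_mem ht, hg, Set.indicator_of_mem ht, mul_assoc]
      congr 1
      rw [Complex.ofReal_exp, ← Complex.exp_add]
      congr 1
      push_cast
      ring
    · rw [Set.indicator_of_notMem ht, hg, Set.indicator_of_notMem ht, zero_mul]
  have habs : (∫ y : ℝ, ‖LaplaceTransform f ((x : ℂ) + Complex.I * y)‖ ^ 2)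
      = ∫ y : ℝ, ‖FT g y‖ ^ 2 := by
    refine integral_congr_ae (Eventually.of_forall fun y => ?_)
    dsimp only
    rw [hLT y]
  have hRHS : (∫ t in Set.Ioi (0 : ℝ), Real.exp (-(2 * x * t)) * ‖f t‖ ^ 2)
      = ∫ t : ℝ, ‖g t‖ ^ 2 := by
    rw [← integral_indicator measurableSet_Ioi]
    refine integral_congr_ae (Eventually.of_forall fun t => ?_)
    dsimp only
    by_cases ht : t ∈ Set.Ioi (0 : ℝ)
    · rw [Set.indicator_of_mem ht, hg, Set.indicator_of_mem ht]
      rw [norm_mul, Complex.norm_real, Real.norm_eq_abs,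
        _root_.abs_of_pos (Real.exp_pos _), mul_pow]
      have he : Real.exp (-x * t) ^ 2 = Real.exp (-(2 * x * t)) := by
        rw [sq, ← Real.exp_add]; ring_nf
      rw [he]
      ring
    · rw [Set.indicator_of_notMem ht, hg, Set.indicator_of_notMem ht]
      simp
  rw [habs, plancherel_aux hgm h1 h2, hRHS, ← mul_assoc, one_div,
    inv_mul_cancel₀ (by positivity), one_mul]
end

section
/- (Convolution theorem for the Laplace transform) If f and g are Laplace-Pego functions with a common order x ≥ 0, then for every complex number z with Re(z) ≥ x one has 𝓛{f ⋆ g}(z) = 𝓛{f}(z) · 𝓛{g}(z). -/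
open MeasureTheory Complex Filter Set
open scoped Convolution

set_option maxHeartbeats 1000000

/-- The convolution `(f ⋆ g)(t) = ∫₀^t f(s) g(t-s) ds` of functions on `(0,∞)`. -/
noncomputable def LaplaceConv (f g : ℝ → ℂ) (t : ℝ) : ℂ :=
  ∫ s in Set.Ioo (0 : ℝ) t, f s * g (t - s)

lemma laplace_aux_integrable (h : ℝ → ℂ) (x : ℝ) (z : ℂ) (hz : x ≤ z.re) (hm : Measurable h)
    (hi : MeasureTheory.IntegrableOn (fun t : ℝ => h t * Real.exp (-x * t)) (Set.Ioi 0)) :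
    Integrable (Set.indicator (Set.Ioi 0) (fun t => h t * Complex.exp (-z * t))) volume := by
  rw [integrable_indicator_iff measurableSet_Ioi]
  have hmeas : Measurable fun t : ℝ => h t * Complex.exp (-z * t) := by measurability
  refine MeasureTheory.Integrable.mono hi hmeas.aestronglyMeasurable ?_
  filter_upwards [ae_restrict_mem measurableSet_Ioi] with t ht
  simp only [norm_mul, Complex.norm_exp]
  have h1 : ‖((Real.exp (-x * t) : ℝ) : ℂ)‖ = Real.exp (-x * t) := by
    rw [Complex.norm_real, Real.norm_of_nonneg (Real.exp_pos _).le]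
  rw [h1]
  refine mul_le_mul_of_nonneg_left ?_ (norm_nonneg _)
  refine Real.exp_le_exp.2 ?_
  have hre : (-z * (t : ℂ)).re = -z.re * t := by simp [Complex.mul_re]
  rw [hre]
  nlinarith [le_of_lt (mem_Ioi.1 ht)]

/-- convolution theorem for the Laplace transform: for Laplace-Pego
functions `f, g` of common order `x` and any `z` with `Re z ≥ x`,
`𝓛{f ⋆ g}(z) = 𝓛{f}(z) ⬝ 𝓛{g}(z)`. -/
theorem laplace_conv (f g : ℝ → ℂ) (x : ℝ) (hx : 0 ≤ x)
    (hf : IsLaplacePego f x) (hg : IsLaplacePego g x) :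
    ∀ z : ℂ, x ≤ z.re →
      LaplaceTransform (LaplaceConv f g) z = LaplaceTransform f z * LaplaceTransform g z := by
  intro z hz
  set F : ℝ → ℂ := Set.indicator (Set.Ioi 0) (fun t => f t * Complex.exp (-z * t)) with hF
  set G : ℝ → ℂ := Set.indicator (Set.Ioi 0) (fun t => g t * Complex.exp (-z * t)) with hG
  have hFi : Integrable F volume := laplace_aux_integrable f x z hz hf.1 hf.2.1
  have hGi : Integrable G volume := laplace_aux_integrable g x z hz hg.1 hg.2.1
  have hconv : ∀ t : ℝ,
      (F ⋆[ContinuousLinearMap.mul ℝ ℂ, volume] G) t =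
        Set.indicator (Set.Ioi 0)
          (fun t => LaplaceConv f g t * Complex.exp (-z * t)) t := by
    intro t
    have heq : (fun s => (ContinuousLinearMap.mul ℝ ℂ) (F s) (G (t - s)))
        = Set.indicator (Set.Ioo 0 t) (fun s => f s * g (t - s) * Complex.exp (-z * t)) := by
      funext s
      simp only [ContinuousLinearMap.mul_apply']
      by_cases hs : s ∈ Set.Ioo 0 t
      · rw [Set.indicator_of_mem hs, hF, hG,
          Set.indicator_of_mem (mem_Ioi.2 hs.1), Set.indicator_of_mem (mem_Ioi.2 (sub_pos.2 hs.2))]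
        rw [show (-z * (t : ℂ)) = -z * s + -z * ((t - s : ℝ) : ℂ) by push_cast; ring,
          Complex.exp_add]
        ring
      · rw [Set.indicator_of_notMem hs]
        rw [Set.mem_Ioo, not_and_or] at hs
        rcases hs with h | h
        · rw [hF, Set.indicator_of_notMem (by simpa using h)]; simp
        · rw [hG, Set.indicator_of_notMem (by simp; linarith [not_lt.1 h])]; simp
    rw [MeasureTheory.convolution_def, heq, MeasureTheory.integral_indicator measurableSet_Ioo]
    by_cases ht : 0 < t
    · rw [Set.indicator_of_mem (mem_Ioi.2 ht), MeasureTheory.integral_mul_const]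
      rfl
    · rw [Set.indicator_of_notMem (by simpa using ht)]
      rw [Set.Ioo_eq_empty (by simpa using ht)]
      simp
  have main := MeasureTheory.integral_convolution (ContinuousLinearMap.mul ℝ ℂ) hFi hGi
  simp only [ContinuousLinearMap.mul_apply'] at main
  calc LaplaceTransform (LaplaceConv f g) z
      = ∫ t, Set.indicator (Set.Ioi 0)
          (fun t => LaplaceConv f g t * Complex.exp (-z * t)) t := by
        rw [LaplaceTransform, ← MeasureTheory.integral_indicator measurableSet_Ioi]
    _ = ∫ t, (F ⋆[ContinuousLinearMap.mul ℝ ℂ, volume] G) t :=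
        integral_congr_ae (Filter.Eventually.of_forall fun t => (hconv t).symm)
    _ = (∫ t, F t) * (∫ t, G t) := main
    _ = _ := by
        rw [hF, hG, MeasureTheory.integral_indicator measurableSet_Ioi,
          MeasureTheory.integral_indicator measurableSet_Ioi]
        rfl
end

section
/- Let 𝓕 be a family of Laplace-Pego functions with a common order x ≥ 0 such that the family 𝓕_x = {f_x : f ∈ 𝓕} is bounded in L²((0,∞)). If 𝓕 is exponentially L²-equivanishing at x, then 𝓕 is Laplace equicontinuous at x. -/
open MeasureTheory Complex Filter Set

/-- The family `𝓕_x = {f_x : f ∈ 𝓕}` is bounded in `L²((0,∞))`: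
there is `M > 0` with `∫₀^∞ e^{-2xt} |f(t)|² dt < M` for all `f ∈ 𝓕`. -/
def L2BoundedFamily (𝓕 : Set (ℝ → ℂ)) (x : ℝ) : Prop :=
  ∃ M : ℝ, 0 < M ∧ ∀ f ∈ 𝓕,
    ∫ t in Set.Ioi (0 : ℝ), Real.exp (-(2 * x * t)) * ‖f t‖ ^ 2 < M

/-- `𝓕` is Laplace equicontinuous at `x`: for every `ε > 0` there is `δ > 0` with
`(1/(2π)) ∫_ℝ |𝓛{f}(x+iy+δ) - 𝓛{f}(x+iy)|² dy < ε` for all `f ∈ 𝓕`. -/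
def LaplaceEquicontinuous (𝓕 : Set (ℝ → ℂ)) (x : ℝ) : Prop :=
  ∀ ε : ℝ, 0 < ε → ∃ δ : ℝ, 0 < δ ∧ ∀ f ∈ 𝓕,
    (1 / (2 * Real.pi)) *
        ∫ y : ℝ,
          ‖LaplaceTransform f ((x : ℂ) + Complex.I * y + (δ : ℂ)) -
              LaplaceTransform f ((x : ℂ) + Complex.I * y)‖ ^ 2 < ε

/-- `𝓕` is exponentially `L²`-equivanishing at `x`: for every `ε > 0` there is `T > 0`
with `∫_T^∞ e^{-2xt} |f(t)|² dt < ε` for all `f ∈ 𝓕`. -/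
def ExpL2Equivanishing (𝓕 : Set (ℝ → ℂ)) (x : ℝ) : Prop :=
  ∀ ε : ℝ, 0 < ε → ∃ T : ℝ, 0 < T ∧ ∀ f ∈ 𝓕,
    ∫ t in Set.Ioi T, Real.exp (-(2 * x * t)) * ‖f t‖ ^ 2 < ε

/-- `𝓕` is exponentially `L²`-equicontinuous at `x`: for every `ε > 0` there is `δ > 0`
with `(∫₀^∞ e^{-2xt} |f(t) - f(t-s)|² dt)^{1/2} < ε` for all `s ∈ (0,δ)`, `f ∈ 𝓕`
(functions are extended by `0` for nonpositive arguments, so `f (t - s) = 0` when `t ≤ s`). -/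
def ExpL2Equicontinuous (𝓕 : Set (ℝ → ℂ)) (x : ℝ) : Prop :=
  ∀ ε : ℝ, 0 < ε → ∃ δ : ℝ, 0 < δ ∧ ∀ s ∈ Set.Ioo (0 : ℝ) δ, ∀ f ∈ 𝓕,
    Real.sqrt
        (∫ t in Set.Ioi (0 : ℝ),
          Real.exp (-(2 * x * t)) * ‖f t - f (t - s)‖ ^ 2) < ε

/-- `𝓕` is Laplace equivanishing at `x`: for every `ε > 0` there is `T > 0` with
`∫_{ℝ∖[-T,T]} |𝓛{f}(x+iy)|² dy < ε` for all `f ∈ 𝓕`. -/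
def LaplaceEquivanishing (𝓕 : Set (ℝ → ℂ)) (x : ℝ) : Prop :=
  ∀ ε : ℝ, 0 < ε → ∃ T : ℝ, 0 < T ∧ ∀ f ∈ 𝓕,
    ∫ y in (Set.Icc (-T) T)ᶜ,
      ‖LaplaceTransform f ((x : ℂ) + Complex.I * y)‖ ^ 2 < ε

open scoped Real

section PlancherelAux

noncomputable def FTk (g : ℝ → ℂ) (y : ℝ) : ℂ := ∫ t : ℝ, g t * Complex.exp (-(Complex.I * y * t))

-- Gaussian Fourier computation
lemma inner_gauss {δ : ℝ} (hδ : 0 < δ) (u : ℝ) :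
    ∫ y : ℝ, Complex.exp (-(Complex.I * y * u)) * (Real.exp (-δ * y ^ 2) : ℂ)
      = ((Real.sqrt (π / δ) * Real.exp (-(u ^ 2) / (4 * δ)) : ℝ) : ℂ) := by
  have hb : (0:ℝ) < (δ : ℂ).re := by simpa using hδ
  have hFG := fourierIntegral_gaussian (b := (δ : ℂ)) hb (-(u : ℂ))
  have hpt : ∀ y : ℝ, Complex.exp (-(Complex.I * y * u)) * (Real.exp (-δ * y ^ 2) : ℂ)
      = Complex.exp (Complex.I * (-(u:ℂ)) * y) * Complex.exp (-(δ:ℂ) * y ^ 2) := by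
    intro y
    rw [Complex.ofReal_exp, ← Complex.exp_add, ← Complex.exp_add]
    push_cast
    ring_nf
  calc ∫ y : ℝ, Complex.exp (-(Complex.I * y * u)) * (Real.exp (-δ * y ^ 2) : ℂ)
      = ∫ y : ℝ, Complex.exp (Complex.I * (-(u:ℂ)) * y) * Complex.exp (-(δ:ℂ) * y ^ 2) := by
        exact integral_congr_ae (Eventually.of_forall hpt)
    _ = ((Real.sqrt (π / δ) * Real.exp (-(u ^ 2) / (4 * δ)) : ℝ) : ℂ) := by
        rw [hFG]
        have h1 : ((π : ℂ) / (δ:ℂ)) ^ (1/2 : ℂ) = ((Real.sqrt (π / δ) : ℝ) : ℂ) := by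
          rw [show ((π : ℂ) / (δ:ℂ)) = ((π / δ : ℝ) : ℂ) by push_cast; ring]
          rw [show ((1/2 : ℂ)) = ((1/2 : ℝ) : ℂ) by push_cast; ring]
          rw [← Complex.ofReal_cpow (by positivity)]
          norm_num [Real.sqrt_eq_rpow]
        have h2 : Complex.exp (-(-(u:ℂ)) ^ 2 / (4 * (δ:ℂ))) = ((Real.exp (-(u ^ 2) / (4 * δ)) : ℝ) : ℂ) := by
          rw [show (-(-(u:ℂ)) ^ 2 / (4 * (δ:ℂ))) = ((-(u ^ 2) / (4 * δ) : ℝ) : ℂ) by push_cast; ring]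
          exact (Complex.ofReal_exp _).symm
        rw [h1, h2]; push_cast; ring

lemma Kr_integral {δ : ℝ} (hδ : 0 < δ) :
    ∫ u : ℝ, Real.sqrt (π / δ) * Real.exp (-(u ^ 2) / (4 * δ)) = 2 * π := by
  rw [integral_const_mul]
  have h : ∀ u : ℝ, Real.exp (-(u ^ 2) / (4 * δ)) = Real.exp (-(1/(4*δ)) * u ^ 2) := by
    intro u; ring_nf
  rw [integral_congr_ae (Eventually.of_forall h), integral_gaussian]
  rw [← Real.sqrt_mul (by positivity)]
  rw [show π / δ * (π / (1/(4*δ))) = (2*π)^2 by field_simp; ring]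
  rw [Real.sqrt_sq (by positivity)]

lemma Kr_nonneg {δ : ℝ} (u : ℝ) : 0 ≤ Real.sqrt (π / δ) * Real.exp (-(u ^ 2) / (4 * δ)) := by
  positivity

lemma Kr_integrable {δ : ℝ} (hδ : 0 < δ) :
    Integrable (fun u : ℝ => Real.sqrt (π / δ) * Real.exp (-(u ^ 2) / (4 * δ))) := by
  have h : ∀ u : ℝ, Real.sqrt (π / δ) * Real.exp (-(u ^ 2) / (4 * δ))
      = Real.sqrt (π / δ) * Real.exp (-(1/(4*δ)) * u ^ 2) := by intro u; ring_nf
  simp only [h]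
  exact (integrable_exp_neg_mul_sq (by positivity)).const_mul _

lemma FTk_continuous (g : ℝ → ℂ) (hg1 : Integrable g) : Continuous (FTk g) := by
  show Continuous fun y : ℝ => ∫ t : ℝ, g t * Complex.exp (-(Complex.I * y * t))
  apply continuous_of_dominated (bound := fun t => ‖g t‖)
  · intro y
    exact hg1.aestronglyMeasurable.mul (Continuous.aestronglyMeasurable (by fun_prop))
  · intro y
    filter_upwards with t
    simp [Complex.norm_exp]
  · exact hg1.norm
  · filter_upwards with t
    fun_prop

lemma conj_integrable (g : ℝ → ℂ) (hg1 : Integrable g) :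
    Integrable (fun t => (starRingEnd ℂ) (g t)) := by
  refine hg1.norm.mono' ?_ ?_
  · exact Complex.continuous_conj.comp_aestronglyMeasurable hg1.aestronglyMeasurable
  · filter_upwards with t
    simp

lemma norm_cexp_imag (w : ℂ) (hw : w.re = 0) : ‖Complex.exp w‖ = 1 := by
  simp [Complex.norm_exp, hw]

lemma stepA (g : ℝ → ℂ) (y : ℝ) :
    ((‖FTk g y‖ ^ 2 : ℝ) : ℂ)
      = ∫ p : ℝ × ℝ, (g p.1 * (starRingEnd ℂ) (g p.2))
          * Complex.exp (-(Complex.I * y * (p.1 - p.2))) ∂(volume.prod volume) := by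
  set F := FTk g y with hF
  have hFdef : F = ∫ t : ℝ, g t * Complex.exp (-(Complex.I * y * t)) := rfl
  have h1 : ((‖F‖ ^ 2 : ℝ) : ℂ) = F * (starRingEnd ℂ) F := by
    rw [Complex.mul_conj, Complex.normSq_eq_norm_sq]
  have h2 : (starRingEnd ℂ) F
      = ∫ t : ℝ, (starRingEnd ℂ) (g t) * Complex.exp (Complex.I * y * t) := by
    rw [hFdef, ← integral_conj]
    refine integral_congr_ae (Eventually.of_forall fun t => ?_)
    show (starRingEnd ℂ) (g t * Complex.exp (-(Complex.I * y * t))) = _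
    rw [map_mul, ← Complex.exp_conj]
    simp [Complex.conj_I, Complex.conj_ofReal]
  rw [h1, h2, hFdef, ← integral_prod_mul]
  refine integral_congr_ae (Eventually.of_forall fun p => ?_)
  show g p.1 * Complex.exp (-(Complex.I * y * p.1))
      * ((starRingEnd ℂ) (g p.2) * Complex.exp (Complex.I * y * p.2)) = _
  rw [mul_mul_mul_comm, ← Complex.exp_add]
  congr 2
  push_cast; ring

lemma key_delta (g : ℝ → ℂ) (hg1 : Integrable g)
    (hg2 : Integrable (fun t : ℝ => ‖g t‖ ^ 2)) {δ : ℝ} (hδ : 0 < δ) :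
    ∫ y : ℝ, ‖FTk g y‖ ^ 2 * Real.exp (-δ * y ^ 2) ≤ 2 * π * ∫ t : ℝ, ‖g t‖ ^ 2 := by
  set Kr : ℝ → ℝ := fun u => Real.sqrt (π / δ) * Real.exp (-(u ^ 2) / (4 * δ)) with hKr
  have hKrnn : ∀ u, 0 ≤ Kr u := fun u => by rw [hKr]; positivity
  have hKreven : ∀ a b : ℝ, Kr (a - b) = Kr (b - a) := by
    intro a b; simp only [hKr]; ring_nf
  set G : ℝ × ℝ → ℂ := fun p => g p.1 * (starRingEnd ℂ) (g p.2) with hG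
  have hGint : Integrable G (volume.prod volume) := hg1.mul_prod (conj_integrable g hg1)
  have hGnorm : ∀ p : ℝ × ℝ, ‖G p‖ = ‖g p.1‖ * ‖g p.2‖ := by
    intro p; rw [hG]; simp
  set N := ∫ t : ℝ, ‖g t‖ ^ 2 with hN
  -- the function Hm, its integrability and integral
  set Hm : ℝ × ℝ → ℝ := fun p => (‖g p.1‖ ^ 2 + ‖g p.2‖ ^ 2) / 2 * Kr (p.1 - p.2) with hHm
  have intHm2 : Integrable (fun p : ℝ × ℝ => ‖g p.2‖ ^ 2 * Kr (p.1 - p.2))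
      (volume.prod volume) := by
    exact hg2.convolution_integrand (ContinuousLinearMap.mul ℝ ℝ) (Kr_integrable hδ)
  have intHm1 : Integrable (fun p : ℝ × ℝ => ‖g p.1‖ ^ 2 * Kr (p.1 - p.2))
      (volume.prod volume) := by
    have := intHm2.swap
    refine this.congr (Eventually.of_forall fun p => ?_)
    simp only [Function.comp, Prod.fst_swap, Prod.snd_swap]
    rw [hKreven]
  have intHm : Integrable Hm (volume.prod volume) := by
    have : Hm = fun p => (1/2) * (‖g p.1‖ ^ 2 * Kr (p.1 - p.2))
        + (1/2) * (‖g p.2‖ ^ 2 * Kr (p.1 - p.2)) := by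
      funext p; rw [hHm]; ring
    rw [this]
    exact ((intHm1.const_mul _).add (intHm2.const_mul _))
  have intHmval : ∫ p, Hm p ∂(volume.prod volume) = 2 * π * N := by
    have h1 : ∫ p : ℝ × ℝ, ‖g p.1‖ ^ 2 * Kr (p.1 - p.2) ∂(volume.prod volume)
        = 2 * π * N := by
      have hii := integral_integral (f := fun s t : ℝ => ‖g s‖ ^ 2 * Kr (s - t))
        (μ := volume) (ν := volume) (by exact intHm1)
      rw [← hii]
      have : ∀ s : ℝ, ∫ t : ℝ, ‖g s‖ ^ 2 * Kr (s - t) = ‖g s‖ ^ 2 * (2 * π) := by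
        intro s
        rw [integral_const_mul, integral_sub_left_eq_self Kr volume s, Kr_integral hδ]
      rw [integral_congr_ae (Eventually.of_forall this)]
      rw [integral_mul_const, hN]; ring
    have h2 : ∫ p : ℝ × ℝ, ‖g p.2‖ ^ 2 * Kr (p.1 - p.2) ∂(volume.prod volume)
        = 2 * π * N := by
      rw [← h1, ← integral_prod_swap (fun p : ℝ × ℝ => ‖g p.1‖ ^ 2 * Kr (p.1 - p.2))]
      refine integral_congr_ae (Eventually.of_forall fun p => ?_)
      simp only [Prod.fst_swap, Prod.snd_swap]
      rw [hKreven]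
    have : Hm = fun p => (1/2) * (‖g p.1‖ ^ 2 * Kr (p.1 - p.2))
        + (1/2) * (‖g p.2‖ ^ 2 * Kr (p.1 - p.2)) := by
      funext p; rw [hHm]; ring
    rw [this, integral_add (intHm1.const_mul _) (intHm2.const_mul _),
      integral_const_mul, integral_const_mul, h1, h2]
    ring
  -- Fubini identity
  have hFub : Integrable (Function.uncurry fun (y : ℝ) (p : ℝ × ℝ) =>
      G p * Complex.exp (-(Complex.I * y * (p.1 - p.2))) * (Real.exp (-δ * y ^ 2) : ℂ))
      (volume.prod (volume.prod volume)) := by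
    have hmaj : Integrable (fun z : ℝ × (ℝ × ℝ) => Real.exp (-δ * z.1 ^ 2) * ‖G z.2‖)
        (volume.prod (volume.prod volume)) :=
      (integrable_exp_neg_mul_sq hδ).mul_prod hGint.norm
    refine hmaj.mono' ?_ ?_
    · refine AEStronglyMeasurable.mul (AEStronglyMeasurable.mul ?_ ?_) ?_
      · exact hGint.aestronglyMeasurable.comp_snd
      · exact Continuous.aestronglyMeasurable (by fun_prop)
      · exact Continuous.aestronglyMeasurable (by fun_prop)
    · filter_upwards with z
      rw [Function.uncurry]
      simp only [norm_mul]
      rw [show ‖Complex.exp (-(Complex.I * z.1 * ((z.2.1 : ℂ) - z.2.2)))‖ = 1 by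
        simp [Complex.norm_exp]]
      simp only [Complex.norm_real, Real.norm_of_nonneg (Real.exp_nonneg _), norm_norm]
      exact le_of_eq (by ring)
  have hJc : ((∫ y : ℝ, ‖FTk g y‖ ^ 2 * Real.exp (-δ * y ^ 2) : ℝ) : ℂ)
      = ∫ p : ℝ × ℝ, G p * ((Kr (p.1 - p.2) : ℝ) : ℂ) ∂(volume.prod volume) := by
    rw [show ((∫ y : ℝ, ‖FTk g y‖ ^ 2 * Real.exp (-δ * y ^ 2) : ℝ) : ℂ)
        = ∫ y : ℝ, ((‖FTk g y‖ ^ 2 * Real.exp (-δ * y ^ 2) : ℝ) : ℂ) from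
      (integral_ofReal).symm]
    have step1 : ∀ y : ℝ, ((‖FTk g y‖ ^ 2 * Real.exp (-δ * y ^ 2) : ℝ) : ℂ)
        = ∫ p : ℝ × ℝ, G p * Complex.exp (-(Complex.I * y * (p.1 - p.2)))
            * (Real.exp (-δ * y ^ 2) : ℂ) ∂(volume.prod volume) := by
      intro y
      rw [integral_mul_const, Complex.ofReal_mul, stepA g y]
    rw [integral_congr_ae (Eventually.of_forall step1)]
    rw [integral_integral_swap hFub]
    refine integral_congr_ae (Eventually.of_forall fun p => ?_)
    show (∫ y : ℝ, G p * Complex.exp (-(Complex.I * y * ((p.1 : ℂ) - p.2)))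
        * ((Real.exp (-δ * y ^ 2) : ℝ) : ℂ)) = G p * ((Kr (p.1 - p.2) : ℝ) : ℂ)
    have : ∀ y : ℝ, G p * Complex.exp (-(Complex.I * y * (p.1 - p.2)))
        * (Real.exp (-δ * y ^ 2) : ℂ)
        = G p * (Complex.exp (-(Complex.I * y * (p.1 - p.2))) * (Real.exp (-δ * y ^ 2) : ℂ)) := by
      intro y; ring
    rw [integral_congr_ae (Eventually.of_forall this), integral_const_mul]
    rw [show ((p.1 : ℂ) - p.2) = ((p.1 - p.2 : ℝ) : ℂ) by push_cast; ring]
    rw [inner_gauss hδ (p.1 - p.2)]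
  -- bound
  have hbound : ∫ y : ℝ, ‖FTk g y‖ ^ 2 * Real.exp (-δ * y ^ 2) ≤ 2 * π * N := by
    have h0 : (∫ y : ℝ, ‖FTk g y‖ ^ 2 * Real.exp (-δ * y ^ 2))
        ≤ ‖((∫ y : ℝ, ‖FTk g y‖ ^ 2 * Real.exp (-δ * y ^ 2) : ℝ) : ℂ)‖ := by
      rw [Complex.norm_real]; exact le_abs_self _
    refine h0.trans ?_
    rw [hJc]
    refine (norm_integral_le_integral_norm _).trans ?_
    have hptb : ∀ p : ℝ × ℝ, ‖G p * ((Kr (p.1 - p.2) : ℝ) : ℂ)‖ ≤ Hm p := by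
      intro p
      rw [norm_mul, Complex.norm_real, Real.norm_of_nonneg (hKrnn _), hGnorm, hHm]
      have hk := hKrnn (p.1 - p.2)
      nlinarith [sq_nonneg (‖g p.1‖ - ‖g p.2‖), norm_nonneg (g p.1), norm_nonneg (g p.2)]
    have hint1 : Integrable (fun p : ℝ × ℝ => ‖G p * ((Kr (p.1 - p.2) : ℝ) : ℂ)‖)
        (volume.prod volume) := by
      refine intHm.mono' ?_ ?_
      · refine AEStronglyMeasurable.norm (AEStronglyMeasurable.mul hGint.aestronglyMeasurable ?_)
        exact Continuous.aestronglyMeasurable (by fun_prop)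
      · filter_upwards with p
        rw [norm_norm]
        exact hptb p
    calc ∫ p, ‖G p * ((Kr (p.1 - p.2) : ℝ) : ℂ)‖ ∂(volume.prod volume)
        ≤ ∫ p, Hm p ∂(volume.prod volume) :=
          integral_mono hint1 intHm hptb
      _ = 2 * π * N := intHmval
  exact hbound

lemma plancherel_le (g : ℝ → ℂ) (hg1 : Integrable g)
    (hg2 : Integrable (fun t : ℝ => ‖g t‖ ^ 2)) :
    ∫ y : ℝ, ‖FTk g y‖ ^ 2 ≤ 2 * π * ∫ t : ℝ, ‖g t‖ ^ 2 := by
  set N := ∫ t : ℝ, ‖g t‖ ^ 2 with hN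
  have hNnn : 0 ≤ N := integral_nonneg fun t => by positivity
  have hcont := FTk_continuous g hg1
  have hB : ∀ y : ℝ, ‖FTk g y‖ ≤ ∫ t : ℝ, ‖g t‖ := by
    intro y
    refine (norm_integral_le_integral_norm _).trans (le_of_eq ?_)
    refine integral_congr_ae (Eventually.of_forall fun t => ?_)
    simp [Complex.norm_exp]
  set B := ∫ t : ℝ, ‖g t‖ with hBdef
  -- each regularized integral is bounded
  have hreg : ∀ n : ℕ,
      ∫⁻ y : ℝ, ENNReal.ofReal (‖FTk g y‖ ^ 2 * Real.exp (-(1 / (n + 1)) * y ^ 2))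
        ≤ ENNReal.ofReal (2 * π * N) := by
    intro n
    have hδ : (0 : ℝ) < 1 / (n + 1) := by positivity
    have hint : Integrable (fun y : ℝ => ‖FTk g y‖ ^ 2 * Real.exp (-(1 / (n + 1 : ℝ)) * y ^ 2)) := by
      refine ((integrable_exp_neg_mul_sq hδ).const_mul (B ^ 2)).mono' ?_ ?_
      · exact ((hcont.norm.pow 2).mul (by fun_prop)).aestronglyMeasurable
      · filter_upwards with y
        rw [Real.norm_of_nonneg (by positivity)]
        have h1 : ‖FTk g y‖ ^ 2 ≤ B ^ 2 := by
          have := hB y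
          nlinarith [norm_nonneg (FTk g y)]
        have h2 : (0:ℝ) ≤ Real.exp (-(1 / (n + 1 : ℝ)) * y ^ 2) := Real.exp_nonneg _
        nlinarith
    rw [← ofReal_integral_eq_lintegral_ofReal hint
      (Eventually.of_forall fun y => by positivity)]
    exact ENNReal.ofReal_le_ofReal (key_delta g hg1 hg2 hδ)
  -- Fatou
  have hfatou : ∫⁻ y : ℝ, ENNReal.ofReal (‖FTk g y‖ ^ 2) ≤ ENNReal.ofReal (2 * π * N) := by
    have hlim : ∀ y : ℝ, ENNReal.ofReal (‖FTk g y‖ ^ 2)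
        = liminf (fun n : ℕ =>
            ENNReal.ofReal (‖FTk g y‖ ^ 2 * Real.exp (-(1 / (n + 1)) * y ^ 2))) atTop := by
      intro y
      refine (Filter.Tendsto.liminf_eq ?_).symm
      have h1 : Tendsto (fun n : ℕ => (1 / (n + 1) : ℝ)) atTop (nhds 0) :=
        tendsto_one_div_add_atTop_nhds_zero_nat
      have h2 : Tendsto (fun n : ℕ => ‖FTk g y‖ ^ 2 * Real.exp (-(1 / (n + 1)) * y ^ 2))
          atTop (nhds (‖FTk g y‖ ^ 2)) := by
        have : Tendsto (fun n : ℕ => Real.exp (-(1 / (n + 1)) * y ^ 2)) atTop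
            (nhds (Real.exp (-(0:ℝ) * y ^ 2))) := by
          exact (Real.continuous_exp.tendsto _).comp ((h1.neg.mul_const _))
        simpa using (tendsto_const_nhds.mul this)
      exact (ENNReal.continuous_ofReal.tendsto _).comp h2
    calc ∫⁻ y : ℝ, ENNReal.ofReal (‖FTk g y‖ ^ 2)
        = ∫⁻ y : ℝ, liminf (fun n : ℕ =>
            ENNReal.ofReal (‖FTk g y‖ ^ 2 * Real.exp (-(1 / (n + 1)) * y ^ 2))) atTop := by
          exact lintegral_congr fun y => hlim y
      _ ≤ liminf (fun n : ℕ => ∫⁻ y : ℝ,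
            ENNReal.ofReal (‖FTk g y‖ ^ 2 * Real.exp (-(1 / (n + 1)) * y ^ 2))) atTop := by
          refine lintegral_liminf_le fun n => ?_
          apply ENNReal.measurable_ofReal.comp
          exact ((hcont.norm.pow 2).mul (by fun_prop)).measurable
      _ ≤ liminf (fun _ : ℕ => ENNReal.ofReal (2 * π * N)) atTop := by
          exact Filter.liminf_le_liminf (Eventually.of_forall hreg)
      _ = ENNReal.ofReal (2 * π * N) := Filter.liminf_const _
  -- convert back to a real integral
  rw [integral_eq_lintegral_of_nonneg_ae (f := fun y => ‖FTk g y‖ ^ 2) (Eventually.of_forall fun y => by positivity)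
    ((hcont.norm.pow 2).aestronglyMeasurable : AEStronglyMeasurable (fun y => ‖FTk g y‖ ^ 2) volume)]
  exact ENNReal.toReal_le_of_le_ofReal (by positivity) hfatou

end PlancherelAux

set_option maxHeartbeats 2000000 in
/-- if `𝓕_x` is `L²`-bounded, then exponential `L²`-equivanishing at `x`
implies Laplace equicontinuity at `x`. -/
theorem laplaceEquicontinuous_of_expL2Equivanishing (𝓕 : Set (ℝ → ℂ)) (x : ℝ)
    (hx : 0 ≤ x) (h𝓕 : ∀ f ∈ 𝓕, IsLaplacePego f x)
    (hbdd : L2BoundedFamily 𝓕 x) (hvan : ExpL2Equivanishing 𝓕 x) :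
    LaplaceEquicontinuous 𝓕 x := by
  intro ε hε
  obtain ⟨M, hM, hMb⟩ := hbdd
  obtain ⟨T, hT, hTb⟩ := hvan (ε / 4) (by positivity)
  set δ := Real.sqrt (ε / (4 * M * T ^ 2)) with hδdef
  have hδpos : 0 < δ := Real.sqrt_pos.mpr (by positivity)
  have hδsq : δ ^ 2 = ε / (4 * M * T ^ 2) := Real.sq_sqrt (by positivity)
  refine ⟨δ, hδpos, fun f hf => ?_⟩
  obtain ⟨hfm, hfi, hfl2⟩ := h𝓕 f hf
  -- the weight function φ
  set φ : ℝ → ℝ := fun t => Real.exp (-(2 * x * t)) * ‖f t‖ ^ 2 with hφdef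
  have hexp2 : ∀ t : ℝ, Real.exp (-x * t) ^ 2 = Real.exp (-(2 * x * t)) := by
    intro t; rw [sq, ← Real.exp_add]; ring_nf
  have hφnn : ∀ t, 0 ≤ φ t := fun t => by
    show (0:ℝ) ≤ Real.exp (-(2 * x * t)) * ‖f t‖ ^ 2
    positivity
  have hφeq : ∀ t : ℝ, φ t = ‖f t * ((Real.exp (-x * t) : ℝ) : ℂ)‖ ^ 2 := by
    intro t
    show Real.exp (-(2 * x * t)) * ‖f t‖ ^ 2 = _
    rw [norm_mul, Complex.norm_real,
      Real.norm_of_nonneg (Real.exp_nonneg _), mul_pow, hexp2]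
    ring
  have hφint : IntegrableOn φ (Ioi (0:ℝ)) := by
    have h2 := hfl2.integrable_norm_rpow (by norm_num) (by norm_num)
    have h3 : IntegrableOn (fun t : ℝ => ‖f t * ((Real.exp (-x * t) : ℝ) : ℂ)‖ ^ 2)
        (Ioi (0:ℝ)) := h2.congr (Eventually.of_forall fun t => by norm_num)
    exact h3.congr (Eventually.of_forall fun t => (hφeq t).symm)
  -- the auxiliary function g
  set g : ℝ → ℂ := (Ioi (0:ℝ)).indicator
    (fun t => f t * ((Real.exp (-x * t) * (Real.exp (-δ * t) - 1) : ℝ) : ℂ)) with hgdef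
  have hfac : ∀ t : ℝ, 0 < t → |Real.exp (-δ * t) - 1| ≤ 1 := by
    intro t ht
    rw [abs_le]
    constructor
    · have : Real.exp (-δ * t) ≥ 0 := Real.exp_nonneg _
      linarith
    · have : Real.exp (-δ * t) ≤ 1 := Real.exp_le_one_iff.mpr (by nlinarith)
      linarith
  have hmeasg : AEStronglyMeasurable
      (fun t : ℝ => f t * ((Real.exp (-x * t) * (Real.exp (-δ * t) - 1) : ℝ) : ℂ))
      (volume.restrict (Ioi 0)) := by
    refine (hfm.mul ?_).aestronglyMeasurable
    exact Complex.measurable_ofReal.comp (by fun_prop)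
  have hnormg : ∀ t : ℝ, 0 < t →
      ‖f t * ((Real.exp (-x * t) * (Real.exp (-δ * t) - 1) : ℝ) : ℂ)‖
        ≤ ‖f t * ((Real.exp (-x * t) : ℝ) : ℂ)‖ := by
    intro t ht
    simp only [norm_mul, Complex.norm_real, Real.norm_eq_abs, abs_mul]
    have h1 := hfac t ht
    have h0 : |Real.exp (-x * t)| = Real.exp (-x * t) := _root_.abs_of_nonneg (Real.exp_nonneg _)
    rw [h0]
    have h2 := mul_le_of_le_one_right (Real.exp_nonneg (-x * t)) h1
    exact mul_le_mul_of_nonneg_left h2 (norm_nonneg (f t))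
  have hg1 : Integrable g := by
    rw [hgdef, integrable_indicator_iff measurableSet_Ioi]
    refine hfi.norm.mono' hmeasg ?_
    rw [ae_restrict_iff' measurableSet_Ioi]
    filter_upwards with t ht
    exact hnormg t ht
  have hgsq_rep : (fun t : ℝ => ‖g t‖ ^ 2) = (Ioi (0:ℝ)).indicator
      (fun t => ‖f t * ((Real.exp (-x * t) * (Real.exp (-δ * t) - 1) : ℝ) : ℂ)‖ ^ 2) := by
    funext t
    by_cases ht : t ∈ Ioi (0:ℝ)
    · rw [hgdef]; simp [Set.indicator_of_mem ht]
    · rw [hgdef]; simp [Set.indicator_of_notMem ht]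
  have hg2 : Integrable (fun t : ℝ => ‖g t‖ ^ 2) := by
    rw [hgsq_rep, integrable_indicator_iff measurableSet_Ioi]
    refine hφint.mono' ?_ ?_
    · refine AEStronglyMeasurable.congr (hmeasg.norm.mul hmeasg.norm)
        (Eventually.of_forall fun t => (pow_two _).symm)
    · rw [ae_restrict_iff' measurableSet_Ioi]
      filter_upwards with t ht
      rw [Real.norm_of_nonneg (by positivity), hφeq t]
      have := hnormg t ht
      have h3 := norm_nonneg (f t * ((Real.exp (-x * t) * (Real.exp (-δ * t) - 1) : ℝ) : ℂ))
      nlinarith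
  -- identification of FTk g with the Laplace transform difference
  have hexpre : ∀ w : ℂ, ‖Complex.exp w‖ = Real.exp w.re := fun w => by
    rw [Complex.norm_exp]
  have hintz : ∀ c : ℝ, 0 ≤ c → ∀ y : ℝ, IntegrableOn
      (fun t : ℝ => f t * Complex.exp (-((x:ℂ) + Complex.I * y + (c:ℂ)) * t)) (Ioi 0) := by
    intro c hc y
    refine hfi.norm.mono' ?_ ?_
    · refine (hfm.mul ?_).aestronglyMeasurable
      exact Complex.measurable_exp.comp (by fun_prop)
    · rw [ae_restrict_iff' measurableSet_Ioi]
      filter_upwards with t ht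
      rw [norm_mul, norm_mul, hexpre, Complex.norm_real,
        Real.norm_of_nonneg (Real.exp_nonneg _)]
      have hre : (-((x:ℂ) + Complex.I * y + (c:ℂ)) * t).re = -(x + c) * t := by
        simp [Complex.add_re, Complex.mul_re]
        try ring
      rw [hre]
      have : Real.exp (-(x + c) * t) ≤ Real.exp (-x * t) := by
        apply Real.exp_le_exp.mpr
        nlinarith [le_of_lt (mem_Ioi.mp ht)]
      nlinarith [norm_nonneg (f t)]
  have hFT : ∀ y : ℝ, FTk g y
      = LaplaceTransform f ((x : ℂ) + Complex.I * y + (δ : ℂ))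
        - LaplaceTransform f ((x : ℂ) + Complex.I * y) := by
    intro y
    have hker : ∀ t : ℝ, g t * Complex.exp (-(Complex.I * y * t))
        = (Ioi (0:ℝ)).indicator (fun t : ℝ =>
            f t * Complex.exp (-((x:ℂ) + Complex.I * y + (δ:ℂ)) * t)
            - f t * Complex.exp (-((x:ℂ) + Complex.I * y) * t)) t := by
      intro t
      by_cases ht : t ∈ Ioi (0:ℝ)
      · rw [hgdef, Set.indicator_of_mem ht, Set.indicator_of_mem ht]
        have e1 : Complex.exp (-((x:ℂ) + Complex.I * y + (δ:ℂ)) * t)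
            = ((Real.exp (-x * t) * Real.exp (-δ * t) : ℝ) : ℂ)
              * Complex.exp (-(Complex.I * y * t)) := by
          rw [Complex.ofReal_mul, Complex.ofReal_exp, Complex.ofReal_exp,
            ← Complex.exp_add, ← Complex.exp_add]
          congr 1
          push_cast
          ring
        have e2 : Complex.exp (-((x:ℂ) + Complex.I * y) * t)
            = ((Real.exp (-x * t) : ℝ) : ℂ) * Complex.exp (-(Complex.I * y * t)) := by
          rw [Complex.ofReal_exp, ← Complex.exp_add]
          congr 1
          push_cast
          ring
        rw [e1, e2]
        push_cast
        ring
      · rw [hgdef, Set.indicator_of_notMem ht, Set.indicator_of_notMem ht]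
        simp
    rw [show FTk g y = ∫ t : ℝ, g t * Complex.exp (-(Complex.I * y * t)) from rfl]
    rw [integral_congr_ae (Eventually.of_forall hker), integral_indicator measurableSet_Ioi]
    rw [integral_sub (hintz δ hδpos.le y) (by have h := hintz 0 le_rfl y; simp only [Complex.ofReal_zero, add_zero] at h; exact h)]
    rw [LaplaceTransform, LaplaceTransform]
  -- the value of ∫ ‖g‖²
  have hgsq_val : ∫ t : ℝ, ‖g t‖ ^ 2
      = ∫ t in Ioi (0:ℝ), φ t * (Real.exp (-δ * t) - 1) ^ 2 := by
    rw [hgsq_rep, integral_indicator measurableSet_Ioi]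
    refine integral_congr_ae (Eventually.of_forall fun t => ?_)
    show ‖f t * ((Real.exp (-x * t) * (Real.exp (-δ * t) - 1) : ℝ) : ℂ)‖ ^ 2
        = φ t * (Real.exp (-δ * t) - 1) ^ 2
    rw [hφeq t]
    simp only [norm_mul, Complex.norm_real, Real.norm_eq_abs, abs_mul, mul_pow,
      _root_.sq_abs]
    ring
  -- split estimate
  have hψint : IntegrableOn (fun t : ℝ => φ t * (Real.exp (-δ * t) - 1) ^ 2) (Ioi (0:ℝ)) := by
    refine hφint.mono' ?_ ?_
    · refine AEStronglyMeasurable.mul hφint.aestronglyMeasurable ?_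
      exact Continuous.aestronglyMeasurable (by fun_prop)
    · rw [ae_restrict_iff' measurableSet_Ioi]
      filter_upwards with t ht
      rw [Real.norm_of_nonneg (mul_nonneg (hφnn t) (sq_nonneg _))]
      have h1 := hfac t ht
      have h2 := hφnn t
      have hs2 : (Real.exp (-δ * t) - 1) ^ 2 ≤ 1 := by
        rw [← _root_.sq_abs]
        nlinarith [abs_nonneg (Real.exp (-δ * t) - 1)]
      nlinarith [mul_le_mul_of_nonneg_left hs2 h2]
  have hsplit : ∫ t in Ioi (0:ℝ), φ t * (Real.exp (-δ * t) - 1) ^ 2 < ε / 2 := by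
    have hun : Ioc (0:ℝ) T ∪ Ioi T = Ioi 0 := Ioc_union_Ioi_eq_Ioi hT.le
    have hdisj : Disjoint (Ioc (0:ℝ) T) (Ioi T) := Ioc_disjoint_Ioi le_rfl
    rw [← hun, setIntegral_union hdisj measurableSet_Ioi
      (hψint.mono_set (by rw [← hun]; exact subset_union_left))
      (hψint.mono_set (by rw [← hun]; exact subset_union_right))]
    have hbound1 : ∫ t in Ioc (0:ℝ) T, φ t * (Real.exp (-δ * t) - 1) ^ 2 < ε / 4 := by
      have hle : ∫ t in Ioc (0:ℝ) T, φ t * (Real.exp (-δ * t) - 1) ^ 2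
          ≤ ∫ t in Ioc (0:ℝ) T, (δ ^ 2 * T ^ 2) * φ t := by
        refine setIntegral_mono_on
          (hψint.mono_set (by rw [← hun]; exact subset_union_left))
          ((hφint.mono_set (by rw [← hun]; exact subset_union_left)).const_mul _)
          measurableSet_Ioc ?_
        intro t ht
        obtain ⟨ht0, htT⟩ := ht
        have hA : 1 - δ * t ≤ Real.exp (-δ * t) := by
          have := Real.add_one_le_exp (-δ * t)
          linarith
        have hB : Real.exp (-δ * t) ≤ 1 := Real.exp_le_one_iff.mpr (by nlinarith)
        have hsq : (Real.exp (-δ * t) - 1) ^ 2 ≤ (δ * t) ^ 2 := by nlinarith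
        have ht2 : t ^ 2 ≤ T ^ 2 := by nlinarith
        have htt : (δ * t) ^ 2 ≤ δ ^ 2 * T ^ 2 := by nlinarith [sq_nonneg δ, ht2]
        nlinarith [hφnn t]
      have hle2 : ∫ t in Ioc (0:ℝ) T, (δ ^ 2 * T ^ 2) * φ t
          = (δ ^ 2 * T ^ 2) * ∫ t in Ioc (0:ℝ) T, φ t := integral_const_mul _ _
      have hle3 : ∫ t in Ioc (0:ℝ) T, φ t ≤ ∫ t in Ioi (0:ℝ), φ t := by
        refine setIntegral_mono_set hφint (Eventually.of_forall fun t => hφnn t)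
          (HasSubset.Subset.eventuallyLE Ioc_subset_Ioi_self)
      have hlt : ∫ t in Ioi (0:ℝ), φ t < M := hMb f hf
      have hpos : 0 < δ ^ 2 * T ^ 2 := by positivity
      have : (δ ^ 2 * T ^ 2) * ∫ t in Ioc (0:ℝ) T, φ t < (δ ^ 2 * T ^ 2) * M := by
        exact mul_lt_mul_of_pos_left (lt_of_le_of_lt hle3 hlt) hpos
      have hval : (δ ^ 2 * T ^ 2) * M = ε / 4 := by
        rw [hδsq]
        field_simp
      linarith
    have hbound2 : ∫ t in Ioi T, φ t * (Real.exp (-δ * t) - 1) ^ 2 < ε / 4 := by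
      have hle : ∫ t in Ioi T, φ t * (Real.exp (-δ * t) - 1) ^ 2 ≤ ∫ t in Ioi T, φ t := by
        refine setIntegral_mono_on
          (hψint.mono_set (by rw [← hun]; exact subset_union_right))
          (hφint.mono_set (by rw [← hun]; exact subset_union_right))
          measurableSet_Ioi ?_
        intro t ht
        have ht0 : (0:ℝ) < t := lt_trans hT (mem_Ioi.mp ht)
        have h1 := hfac t ht0
        have h2 := hφnn t
        have hs2 : (Real.exp (-δ * t) - 1) ^ 2 ≤ 1 := by
          rw [← _root_.sq_abs]
          nlinarith [abs_nonneg (Real.exp (-δ * t) - 1)]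
        nlinarith [mul_le_mul_of_nonneg_left hs2 h2]
      exact lt_of_le_of_lt hle (hTb f hf)
    linarith
  -- conclude
  have hplan := plancherel_le g hg1 hg2
  have hmain : (1 / (2 * Real.pi)) * ∫ y : ℝ, ‖FTk g y‖ ^ 2 < ε := by
    have hπ : 0 < 2 * Real.pi := by positivity
    have h1 : ∫ y : ℝ, ‖FTk g y‖ ^ 2 ≤ 2 * Real.pi *
        ∫ t in Ioi (0:ℝ), φ t * (Real.exp (-δ * t) - 1) ^ 2 := by
      rw [← hgsq_val]; exact hplan
    have h2 : (1 / (2 * Real.pi)) * ∫ y : ℝ, ‖FTk g y‖ ^ 2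
        ≤ ∫ t in Ioi (0:ℝ), φ t * (Real.exp (-δ * t) - 1) ^ 2 := by
      rw [div_mul_eq_mul_div, one_mul, div_le_iff₀ hπ]
      linarith [h1]
    have hε2 : ε / 2 < ε := by linarith
    calc (1 / (2 * Real.pi)) * ∫ y : ℝ, ‖FTk g y‖ ^ 2
        ≤ ∫ t in Ioi (0:ℝ), φ t * (Real.exp (-δ * t) - 1) ^ 2 := h2
      _ < ε / 2 := hsplit
      _ < ε := hε2
  have hfinal : ∀ y : ℝ,
      ‖LaplaceTransform f ((x : ℂ) + Complex.I * y + (δ : ℂ)) -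
        LaplaceTransform f ((x : ℂ) + Complex.I * y)‖ ^ 2 = ‖FTk g y‖ ^ 2 := by
    intro y
    rw [hFT y]
  calc (1 / (2 * Real.pi)) *
      ∫ y : ℝ, ‖LaplaceTransform f ((x : ℂ) + Complex.I * y + (δ : ℂ)) -
        LaplaceTransform f ((x : ℂ) + Complex.I * y)‖ ^ 2
      = (1 / (2 * Real.pi)) * ∫ y : ℝ, ‖FTk g y‖ ^ 2 := by
        rw [integral_congr_ae (Eventually.of_forall hfinal)]
    _ < ε := hmain
end

section
/- Let 𝓕 be a family of Laplace-Pego functions with a common order x ≥ 0 such that the family 𝓕_x = {f_x : f ∈ 𝓕} is bounded in L²((0,∞)). If 𝓕 is exponentially L²-equicontinuous at x, then the family 𝓕_x is L²-equicontinuous, i.e. for every ε > 0 there exists δ > 0 such that for all s ∈ (0,δ) and all f ∈ 𝓕, ∫₀^∞ |e^{-x·(t+s)}·f(t+s) - e^{-x·t}·f(t)|² dt < ε. -/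
open MeasureTheory Complex Filter Set

private lemma sq_abs_add_le' (a b : ℂ) :
    ‖a + b‖ ^ 2 ≤ 2 * ‖a‖ ^ 2 + 2 * ‖b‖ ^ 2 := by
  have h := norm_add_le a b
  have ha := norm_nonneg a
  have hb := norm_nonneg b
  have h2 : ‖a + b‖ ^ 2 ≤ (‖a‖ + ‖b‖) ^ 2 :=
    pow_le_pow_left₀ (norm_nonneg _) h 2
  nlinarith [sq_nonneg (‖a‖ - ‖b‖)]

private lemma integrable_sq_abs' {G : ℝ → ℂ} (hG : MeasureTheory.MemLp G 2 MeasureTheory.volume) :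
    MeasureTheory.Integrable (fun t => ‖G t‖ ^ 2) := by
  have h := hG.integrable_norm_rpow two_ne_zero ENNReal.ofNat_ne_top
  have h2 : (2 : ENNReal).toReal = (2 : ℝ) := by simp
  rw [h2] at h
  refine h.congr (Filter.Eventually.of_forall fun t => ?_)
  show ‖G t‖ ^ (2:ℝ) = ‖G t‖ ^ 2
  rw [show ((2:ℝ)) = ((2:ℕ):ℝ) by norm_num, Real.rpow_natCast]

/-- if `𝓕_x` is `L²`-bounded and `𝓕` is exponentially `L²`-equicontinuous
at `x`, then `𝓕_x` is `L²`-equicontinuous. -/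
theorem l2Equicontinuous_of_expL2Equicontinuous (𝓕 : Set (ℝ → ℂ)) (x : ℝ)
    (hx : 0 ≤ x) (h𝓕 : ∀ f ∈ 𝓕, IsLaplacePego f x)
    (hzero : ∀ f ∈ 𝓕, ∀ t : ℝ, t ≤ 0 → f t = 0)
    (hbdd : L2BoundedFamily 𝓕 x) (hequi : ExpL2Equicontinuous 𝓕 x) :
    ∀ ε : ℝ, 0 < ε → ∃ δ : ℝ, 0 < δ ∧ ∀ s ∈ Set.Ioo (0 : ℝ) δ, ∀ f ∈ 𝓕,
      ∫ t in Set.Ioi (0 : ℝ),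
        ‖Real.exp (-(x * (t + s))) * f (t + s) -
          Real.exp (-(x * t)) * f t‖ ^ 2 < ε := by
  obtain ⟨M, hM, hMf⟩ := hbdd
  intro ε hε
  obtain ⟨δ₁, hδ₁, hδ₁f⟩ := hequi (Real.sqrt (ε / 8)) (Real.sqrt_pos.2 (by linarith))
  set δ₂ : ℝ := Real.sqrt (ε / (4 * (x ^ 2 * M + 1))) with hδ₂def
  have hδ₂ : 0 < δ₂ := Real.sqrt_pos.2 (by positivity)
  refine ⟨min δ₁ δ₂, lt_min hδ₁ hδ₂, ?_⟩
  rintro s ⟨hs0, hsδ⟩ f hf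
  set F : ℝ → ℂ := fun t => (Real.exp (-(x * t)) : ℂ) * f t with hFdef
  have hfun : (fun t : ℝ => f t * (Real.exp (-x * t) : ℂ)) = F := by
    funext t; rw [hFdef]; rw [neg_mul]; ring
  have hFrestrict : MeasureTheory.MemLp F 2 (volume.restrict (Set.Ioi 0)) :=
    hfun ▸ (h𝓕 f hf).2.2
  have hF0 : ∀ t : ℝ, t ≤ 0 → F t = 0 := by
    intro t ht; rw [hFdef]; simp [hzero f hf t ht]
  have hFmem : MeasureTheory.MemLp F 2 volume := by
    have hind : F = (Set.Ioi (0 : ℝ)).indicator F := by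
      funext t
      by_cases ht : t ∈ Set.Ioi (0 : ℝ)
      · rw [Set.indicator_of_mem ht]
      · rw [Set.indicator_of_notMem ht, hF0 t (by simpa using ht)]
    rw [hind]
    exact (MeasureTheory.memLp_indicator_iff_restrict measurableSet_Ioi).2 hFrestrict
  set c : ℂ := (Real.exp (-(x * s)) : ℂ) with hcdef
  set K : ℝ → ℂ := fun t => F t - c * F (t - s) with hKdef
  have hFshift : MeasureTheory.MemLp (fun t => F (t + (-s))) 2 volume :=
    hFmem.comp_measurePreserving (measurePreserving_add_right volume (-s))
  have hKmem : MeasureTheory.MemLp K 2 volume := by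
    have heq : (fun t : ℝ => F t - c * F (t + (-s))) = K := by
      funext t; rw [hKdef]; rw [← sub_eq_add_neg]
    exact heq ▸ hFmem.sub (hFshift.const_mul c)
  set A : ℝ → ℂ := fun t => K (t + s) with hAdef
  have hAmem : MeasureTheory.MemLp A 2 volume :=
    hKmem.comp_measurePreserving (measurePreserving_add_right volume s)
  set B : ℝ → ℂ := fun t => (c - 1) * F t with hBdef
  have hBmem : MeasureTheory.MemLp B 2 volume := hFmem.const_mul (c - 1)
  have hAint := integrable_sq_abs' hAmem
  have hBint := integrable_sq_abs' hBmem
  have hKint := integrable_sq_abs' hKmem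
  -- pointwise bound
  have hpt : ∀ t : ℝ, ‖F (t + s) - F t‖ ^ 2 ≤
      2 * ‖A t‖ ^ 2 + 2 * ‖B t‖ ^ 2 := by
    intro t
    have hsum : F (t + s) - F t = A t + B t := by
      simp only [hAdef, hKdef, hBdef, add_sub_cancel_right]; ring
    rw [hsum]; exact sq_abs_add_le' _ _
  have step1 : (∫ t in Set.Ioi (0 : ℝ), ‖F (t + s) - F t‖ ^ 2) ≤
      ∫ t in Set.Ioi (0 : ℝ),
        (2 * ‖A t‖ ^ 2 + 2 * ‖B t‖ ^ 2) := by
    refine MeasureTheory.integral_mono_of_nonneg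
      (Filter.Eventually.of_forall fun t => by positivity)
      (((hAint.const_mul 2).add (hBint.const_mul 2)).restrict)
      (Filter.Eventually.of_forall hpt)
  have hsplit : (∫ t in Set.Ioi (0 : ℝ),
        (2 * ‖A t‖ ^ 2 + 2 * ‖B t‖ ^ 2)) =
      2 * (∫ t in Set.Ioi (0 : ℝ), ‖A t‖ ^ 2) +
        2 * (∫ t in Set.Ioi (0 : ℝ), ‖B t‖ ^ 2) := by
    rw [MeasureTheory.integral_add ((hAint.const_mul 2).restrict)
        ((hBint.const_mul 2).restrict),
      MeasureTheory.integral_const_mul, MeasureTheory.integral_const_mul]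
  -- bound the A-term via translation
  have hA_translate : (∫ t in Set.Ioi (0 : ℝ), ‖A t‖ ^ 2) =
      ∫ u in Set.Ioi s, ‖K u‖ ^ 2 := by
    have himg : (fun u : ℝ => u + s) '' Set.Ioi 0 = Set.Ioi s := by
      rw [Set.image_add_const_Ioi, zero_add]
    calc (∫ t in Set.Ioi (0 : ℝ), ‖A t‖ ^ 2)
        = ∫ t in Set.Ioi (0 : ℝ), ‖K (t + s)‖ ^ 2 := rfl
      _ = ∫ u in (fun u : ℝ => u + s) '' Set.Ioi 0, ‖K u‖ ^ 2 :=
          ((measurePreserving_add_right volume s).setIntegral_image_emb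
            (measurableEmbedding_addRight s) (fun u => ‖K u‖ ^ 2)
            (Set.Ioi 0)).symm
      _ = ∫ u in Set.Ioi s, ‖K u‖ ^ 2 := by rw [himg]
  have hA_mono : (∫ u in Set.Ioi s, ‖K u‖ ^ 2) ≤
      ∫ u in Set.Ioi (0 : ℝ), ‖K u‖ ^ 2 :=
    MeasureTheory.setIntegral_mono_set hKint.integrableOn
      (Filter.Eventually.of_forall fun u => by positivity)
      ((Set.Ioi_subset_Ioi hs0.le).eventuallyLE)
  have hK_eq : ∀ u : ℝ, ‖K u‖ ^ 2 =
      Real.exp (-(2 * x * u)) * ‖f u - f (u - s)‖ ^ 2 := by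
    intro u
    have hcF : c * F (u - s) = (Real.exp (-(x * u)) : ℂ) * f (u - s) := by
      simp only [hcdef, hFdef]
      rw [← mul_assoc, ← Complex.ofReal_mul, ← Real.exp_add]
      congr 3
      ring
    have h1 : K u = (Real.exp (-(x * u)) : ℂ) * (f u - f (u - s)) := by
      simp only [hKdef]
      rw [hcF]
      simp only [hFdef]
      ring
    rw [h1, norm_mul, Complex.norm_real, Real.norm_eq_abs, abs_of_pos (Real.exp_pos _), mul_pow]
    congr 1
    rw [sq, ← Real.exp_add]
    congr 1
    ring
  have hKbound : (∫ u in Set.Ioi (0 : ℝ), ‖K u‖ ^ 2) < ε / 8 := by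
    have hs1 : s ∈ Set.Ioo (0 : ℝ) δ₁ := ⟨hs0, lt_of_lt_of_le hsδ (min_le_left _ _)⟩
    have h := hδ₁f s hs1 f hf
    have hint_eq : (∫ u in Set.Ioi (0 : ℝ), ‖K u‖ ^ 2) =
        ∫ u in Set.Ioi (0 : ℝ),
          Real.exp (-(2 * x * u)) * ‖f u - f (u - s)‖ ^ 2 := by
      simp_rw [hK_eq]
    rw [hint_eq]
    by_contra hcon
    push_neg at hcon
    exact absurd h (not_lt.2 (Real.sqrt_le_sqrt hcon))
  -- bound the B-term
  have hr0 : 0 ≤ 1 - Real.exp (-(x * s)) := by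
    have : Real.exp (-(x * s)) ≤ 1 := by
      rw [Real.exp_le_one_iff]
      have := mul_nonneg hx hs0.le
      linarith
    linarith
  have hrle : 1 - Real.exp (-(x * s)) ≤ x * s := by
    have := Real.add_one_le_exp (-(x * s))
    linarith
  have hB_eq : ∀ t : ℝ, ‖B t‖ ^ 2 =
      (1 - Real.exp (-(x * s))) ^ 2 *
        (Real.exp (-(2 * x * t)) * ‖f t‖ ^ 2) := by
    intro t
    have habs_c : ‖c - 1‖ = 1 - Real.exp (-(x * s)) := by
      rw [hcdef,
        show (Real.exp (-(x * s)) : ℂ) - 1 = ((Real.exp (-(x * s)) - 1 : ℝ) : ℂ) by push_cast; ring,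
        Complex.norm_real, Real.norm_eq_abs, abs_of_nonpos (by linarith), neg_sub]
    have hexp : Real.exp (-(x * t)) ^ 2 = Real.exp (-(2 * x * t)) := by
      rw [sq, ← Real.exp_add]; congr 1; ring
    simp only [hBdef, hFdef]
    rw [norm_mul, norm_mul, habs_c, Complex.norm_real, Real.norm_eq_abs, abs_of_pos (Real.exp_pos _),
      mul_pow, mul_pow, hexp]
  have hFbound : (∫ t in Set.Ioi (0 : ℝ),
      Real.exp (-(2 * x * t)) * ‖f t‖ ^ 2) < M := hMf f hf
  have hFnonneg : (0 : ℝ) ≤ ∫ t in Set.Ioi (0 : ℝ),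
      Real.exp (-(2 * x * t)) * ‖f t‖ ^ 2 :=
    MeasureTheory.setIntegral_nonneg measurableSet_Ioi fun t _ => by positivity
  have hs2 : s ^ 2 < ε / (4 * (x ^ 2 * M + 1)) := by
    have hsδ₂ : s < δ₂ := lt_of_lt_of_le hsδ (min_le_right _ _)
    have hsq := Real.sq_sqrt (show (0 : ℝ) ≤ ε / (4 * (x ^ 2 * M + 1)) by positivity)
    rw [hδ₂def] at hsδ₂
    nlinarith
  have hBbound : (∫ t in Set.Ioi (0 : ℝ), ‖B t‖ ^ 2) ≤ ε / 4 := by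
    have hBsplit : (∫ t in Set.Ioi (0 : ℝ), ‖B t‖ ^ 2) =
        (1 - Real.exp (-(x * s))) ^ 2 *
          ∫ t in Set.Ioi (0 : ℝ), Real.exp (-(2 * x * t)) * ‖f t‖ ^ 2 := by
      simp_rw [hB_eq]
      rw [MeasureTheory.integral_const_mul]
    rw [hBsplit]
    have h1 : (1 - Real.exp (-(x * s))) ^ 2 ≤ (x * s) ^ 2 := by nlinarith
    have hxM : (0 : ℝ) < x ^ 2 * M + 1 := by positivity
    have key : (x * s) ^ 2 * M ≤ ε / 4 := by
      have h2 : (x * s) ^ 2 * M = x ^ 2 * M * s ^ 2 := by ring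
      rw [h2]
      have h3 : x ^ 2 * M * s ^ 2 ≤ x ^ 2 * M * (ε / (4 * (x ^ 2 * M + 1))) := by
        apply mul_le_mul_of_nonneg_left hs2.le (by positivity)
      refine h3.trans ?_
      have h5 : x ^ 2 * M * (ε / (4 * (x ^ 2 * M + 1))) =
          ε / 4 * (x ^ 2 * M / (x ^ 2 * M + 1)) := by
        field_simp
      rw [h5]
      have h6 : x ^ 2 * M / (x ^ 2 * M + 1) ≤ 1 := by
        rw [div_le_one hxM]
        linarith
      calc ε / 4 * (x ^ 2 * M / (x ^ 2 * M + 1)) ≤ ε / 4 * 1 := by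
            apply mul_le_mul_of_nonneg_left h6 (by positivity)
        _ = ε / 4 := mul_one _
    calc (1 - Real.exp (-(x * s))) ^ 2 *
          (∫ t in Set.Ioi (0 : ℝ), Real.exp (-(2 * x * t)) * ‖f t‖ ^ 2)
        ≤ (x * s) ^ 2 *
          (∫ t in Set.Ioi (0 : ℝ), Real.exp (-(2 * x * t)) * ‖f t‖ ^ 2) :=
          mul_le_mul_of_nonneg_right h1 hFnonneg
      _ ≤ (x * s) ^ 2 * M := mul_le_mul_of_nonneg_left hFbound.le (by positivity)
      _ ≤ ε / 4 := key
  -- assemble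
  have hgoal : (∫ t in Set.Ioi (0 : ℝ),
      ‖(Real.exp (-(x * (t + s))) : ℂ) * f (t + s) -
        (Real.exp (-(x * t)) : ℂ) * f t‖ ^ 2) =
      ∫ t in Set.Ioi (0 : ℝ), ‖F (t + s) - F t‖ ^ 2 := rfl
  rw [hgoal]
  have hAfinal : (∫ t in Set.Ioi (0 : ℝ), ‖A t‖ ^ 2) < ε / 8 :=
    lt_of_le_of_lt (hA_translate ▸ hA_mono) hKbound
  calc (∫ t in Set.Ioi (0 : ℝ), ‖F (t + s) - F t‖ ^ 2)
      ≤ 2 * (∫ t in Set.Ioi (0 : ℝ), ‖A t‖ ^ 2) +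
        2 * (∫ t in Set.Ioi (0 : ℝ), ‖B t‖ ^ 2) := hsplit ▸ step1
    _ < 2 * (ε / 8) + 2 * (ε / 4) := by
        apply add_lt_add_of_lt_of_le
        · linarith
        · linarith
    _ < ε := by linarith
end

section
/- Let 𝓕 be a family of Laplace-Pego functions with a common order x ≥ 0 such that the family 𝓕_x = {f_x: f ∈ 𝓕} is bounded in L²((0,∞)). If the family 𝓕_x is L²-equicontinuous, i.e. for every ε > 0 there exists δ > 0 such that for all s ∈ (0,δ) and all f ∈ 𝓕, ∫₀^∞ |e^{-x·(t+s)}·f(t+s) - e^{-x·t}·f(t)|² dt < ε, then 𝓕 is exponentially L²-equicontinuous at x. -/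
open MeasureTheory Complex Filter Set

open scoped ENNReal

private lemma normsq_sub_le_aux (a b : ℂ) : ‖a - b‖ ^ 2 ≤ 2 * ‖a‖ ^ 2 + 2 * ‖b‖ ^ 2 := by
  have h := norm_sub_le a b
  have h2 : ‖a - b‖ ^ 2 ≤ (‖a‖ + ‖b‖) ^ 2 := pow_le_pow_left₀ (norm_nonneg _) h 2
  nlinarith [sq_nonneg (‖a‖ - ‖b‖)]

private lemma normsq_le_of_sub_aux (a b : ℂ) : ‖a‖ ^ 2 ≤ 2 * ‖b - a‖ ^ 2 + 2 * ‖b‖ ^ 2 := by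
  have h : ‖a‖ ≤ ‖b‖ + ‖b - a‖ := by
    have := norm_sub_le b (b - a)
    simpa using this
  have h2 : ‖a‖ ^ 2 ≤ (‖b‖ + ‖b - a‖) ^ 2 := pow_le_pow_left₀ (norm_nonneg _) h 2
  nlinarith [sq_nonneg (‖b‖ - ‖b - a‖)]

private lemma key_ineq_aux {u c : ℝ} (hu : 0 ≤ u) (hc : 1 - u ≤ c) (hc1 : c ≤ 1) (a b : ℂ) :
    ‖a - (c : ℂ) * b‖ ^ 2 ≤ 2 * ‖a - b‖ ^ 2 + 2 * u ^ 2 * ‖b‖ ^ 2 := by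
  have hbn := norm_nonneg b
  have h2 : ‖b - (c : ℂ) * b‖ = (1 - c) * ‖b‖ := by
    have hb : b - (c : ℂ) * b = ((1 - c : ℝ) : ℂ) * b := by push_cast; ring
    rw [hb, norm_mul, Complex.norm_real, Real.norm_of_nonneg (by linarith)]
  have h1 : ‖a - (c : ℂ) * b‖ ≤ ‖a - b‖ + ‖b - (c : ℂ) * b‖ := by
    have hab : a - (c : ℂ) * b = (a - b) + (b - (c : ℂ) * b) := by ring
    rw [hab]; exact norm_add_le _ _
  have h3 : ‖a - (c : ℂ) * b‖ ≤ ‖a - b‖ + u * ‖b‖ := by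
    have : (1 - c) * ‖b‖ ≤ u * ‖b‖ := mul_le_mul_of_nonneg_right (by linarith) hbn
    rw [h2] at h1; linarith
  have h4 : ‖a - (c : ℂ) * b‖ ^ 2 ≤ (‖a - b‖ + u * ‖b‖) ^ 2 :=
    pow_le_pow_left₀ (norm_nonneg _) h3 2
  nlinarith [sq_nonneg (‖a - b‖ - u * ‖b‖)]

set_option maxHeartbeats 2000000 in
/-- if `𝓕_x` is `L²`-bounded and `L²`-equicontinuous, then `𝓕` is
exponentially `L²`-equicontinuous at `x`. -/
theorem expL2Equicontinuous_of_l2Equicontinuous (𝓕 : Set (ℝ → ℂ)) (x : ℝ)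
    (hx : 0 ≤ x) (h𝓕 : ∀ f ∈ 𝓕, IsLaplacePego f x)
    (hzero : ∀ f ∈ 𝓕, ∀ t : ℝ, t ≤ 0 → f t = 0)
    (hbdd : L2BoundedFamily 𝓕 x)
    (hequi : ∀ ε : ℝ, 0 < ε → ∃ δ : ℝ, 0 < δ ∧ ∀ s ∈ Set.Ioo (0 : ℝ) δ, ∀ f ∈ 𝓕,
      ∫ t in Set.Ioi (0 : ℝ),
        ‖(Real.exp (-(x * (t + s))) : ℂ) * f (t + s) -
          (Real.exp (-(x * t)) : ℂ) * f t‖ ^ 2 < ε) :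
    ExpL2Equicontinuous 𝓕 x := by
  intro ε hε
  obtain ⟨M, hM, hbddM⟩ := hbdd
  have hε₁ : (0:ℝ) < ε ^ 2 / 16 := by positivity
  obtain ⟨δ₁, hδ₁, hδ₁p⟩ := hequi (ε ^ 2 / 16) hε₁
  set δ₂ : ℝ := ε ^ 2 * δ₁ / (128 * M) with hδ₂def
  set δ₃ : ℝ := ε / ((x + 1) * Real.sqrt (32 * M)) with hδ₃def
  have hδ₂ : 0 < δ₂ := div_pos (mul_pos (pow_pos hε 2) hδ₁) (by linarith)
  have hsqrtpos : 0 < Real.sqrt (32 * M) := Real.sqrt_pos.2 (by linarith)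
  have hδ₃ : 0 < δ₃ := div_pos hε (mul_pos (by linarith) hsqrtpos)
  refine ⟨min δ₁ (min δ₂ δ₃), lt_min hδ₁ (lt_min hδ₂ hδ₃), ?_⟩
  intro s hs f hf
  obtain ⟨hs0, hsδ⟩ := hs
  have hsδ₁ : s < δ₁ := lt_of_lt_of_le hsδ (min_le_left _ _)
  have hsδ₂ : s < δ₂ := lt_of_lt_of_le hsδ ((min_le_right _ _).trans (min_le_left _ _))
  have hsδ₃ : s < δ₃ := lt_of_lt_of_le hsδ ((min_le_right _ _).trans (min_le_right _ _))
  have hfm : Measurable f := (h𝓕 f hf).1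
  have hfz : ∀ t : ℝ, t ≤ 0 → f t = 0 := hzero f hf
  set g : ℝ → ℂ := fun t => (Real.exp (-(x * t)) : ℂ) * f t with hgdef
  have hgm : Measurable g :=
    (Complex.measurable_ofReal.comp (Real.measurable_exp.comp
      ((measurable_const.mul measurable_id).neg))).mul hfm
  have hg0 : ∀ t : ℝ, t ≤ 0 → g t = 0 := fun t ht => by
    simp [hgdef, hfz t ht]
  set φ : ℝ → ℝ≥0∞ := fun t => ENNReal.ofReal (‖g t‖ ^ 2) with hφdef
  have hφm : Measurable φ := ENNReal.measurable_ofReal.comp (hgm.norm.pow_const 2)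
  have hφ0 : ∀ t : ℝ, t ≤ 0 → φ t = 0 := fun t ht => by
    simp [hφdef, hg0 t ht]
  -- vanishing of φ on Iic 0
  have hIic0 : ∫⁻ t in Iic (0:ℝ), φ t = 0 := by
    rw [← lintegral_indicator measurableSet_Iic]
    have hind : (Iic (0:ℝ)).indicator φ = fun _ => 0 := by
      funext t
      by_cases ht : t ≤ 0
      · rw [Set.indicator_of_mem (mem_Iic.2 ht)]; exact hφ0 t ht
      · rw [Set.indicator_of_notMem (by simpa using ht)]
    rw [hind, lintegral_zero]
  set A : ℝ≥0∞ := ∫⁻ t, φ t with hAdef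
  have hAsplit : ∫⁻ t in Ioi (0:ℝ), φ t = A := by
    have h := lintegral_add_compl (μ := volume) φ (measurableSet_Ioi (a := (0:ℝ)))
    rw [compl_Ioi, hIic0, add_zero] at h
    rw [hAdef, ← h]
  -- Memℒp and integrability of ‖g‖²
  have hmem : MemLp g 2 (volume.restrict (Ioi (0:ℝ))) := by
    have hgeq : g = fun t : ℝ => f t * (Real.exp (-x * t) : ℂ) := by
      funext t; simp only [hgdef, neg_mul]; ring
    rw [hgeq]; exact (h𝓕 f hf).2.2
  have hintsq : IntegrableOn (fun t => ‖g t‖ ^ 2) (Ioi (0:ℝ)) := by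
    have h := hmem.integrable_norm_rpow (by norm_num) (by norm_num)
    have h2 : (fun t => ‖g t‖ ^ (2:ℝ≥0∞).toReal) = fun t => ‖g t‖ ^ 2 := by
      funext t; norm_num
    rwa [h2] at h
  -- L² bound : A ≤ M
  have hptA : ∀ t : ℝ, Real.exp (-(2 * x * t)) * ‖f t‖ ^ 2 = ‖g t‖ ^ 2 := by
    intro t
    have hn : ‖g t‖ = Real.exp (-(x * t)) * ‖f t‖ := by
      simp only [hgdef]
      rw [norm_mul, Complex.norm_real, Real.norm_of_nonneg (Real.exp_pos _).le]
    have he : Real.exp (-(x * t)) ^ 2 = Real.exp (-(2 * x * t)) := by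
      rw [sq, ← Real.exp_add]; ring_nf
    rw [hn, mul_pow, he]
  have hAM : A ≤ ENNReal.ofReal M := by
    have hb := hbddM f hf
    have heqi : ∫ t in Ioi (0:ℝ), Real.exp (-(2 * x * t)) * ‖f t‖ ^ 2
        = ∫ t in Ioi (0:ℝ), ‖g t‖ ^ 2 :=
      integral_congr_ae (Filter.Eventually.of_forall fun t => hptA t)
    rw [heqi] at hb
    have hofreal := ofReal_integral_eq_lintegral_ofReal hintsq
      (Filter.Eventually.of_forall fun t => sq_nonneg _)
    rw [← hAsplit]
    calc ∫⁻ t in Ioi (0:ℝ), φ t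
        = ENNReal.ofReal (∫ t in Ioi (0:ℝ), ‖g t‖ ^ 2) := hofreal.symm
      _ ≤ ENNReal.ofReal M := ENNReal.ofReal_le_ofReal hb.le
  have hAtop : A ≠ ⊤ := (lt_of_le_of_lt hAM ENNReal.ofReal_lt_top).ne
  -- translation invariance
  have htrans : ∀ c : ℝ, ∫⁻ t : ℝ, φ (t + c) = A := fun c =>
    lintegral_add_right_eq_self φ c
  -- equicontinuity hypothesis in lintegral form
  have hΦ : ∀ σ ∈ Ioo (0:ℝ) δ₁,
      ∫⁻ t in Ioi (0:ℝ), ENNReal.ofReal (‖g (t + σ) - g t‖ ^ 2)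
        < ENNReal.ofReal (ε ^ 2 / 16) := by
    intro σ hσ
    have hφσ : Measurable fun t : ℝ => φ (t + σ) := hφm.comp (measurable_add_const σ)
    have hb : ∫ t in Ioi (0:ℝ), ‖g (t + σ) - g t‖ ^ 2 < ε ^ 2 / 16 := by
      have hb0 := hδ₁p σ hσ f hf
      have heqi : ∫ t in Ioi (0:ℝ), ‖g (t + σ) - g t‖ ^ 2
          = ∫ t in Ioi (0:ℝ), ‖(Real.exp (-(x * (t + σ))) : ℂ) * f (t + σ)
              - (Real.exp (-(x * t)) : ℂ) * f t‖ ^ 2 :=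
        integral_congr_ae (Filter.Eventually.of_forall fun t => by
          simp only [hgdef])
      rw [heqi]; exact hb0
    have hmeas2 : Measurable (fun t : ℝ => ‖g (t + σ) - g t‖ ^ 2) :=
      (((hgm.comp (measurable_add_const σ)).sub hgm).norm.pow_const 2)
    have hpt : ∀ t : ℝ, ENNReal.ofReal (‖g (t + σ) - g t‖ ^ 2)
        ≤ 2 * φ (t + σ) + 2 * φ t := by
      intro t
      calc ENNReal.ofReal (‖g (t + σ) - g t‖ ^ 2)
          ≤ ENNReal.ofReal (2 * ‖g (t + σ)‖ ^ 2 + 2 * ‖g t‖ ^ 2) :=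
            ENNReal.ofReal_le_ofReal (normsq_sub_le_aux _ _)
        _ = 2 * φ (t + σ) + 2 * φ t := by
            rw [ENNReal.ofReal_add (by positivity) (by positivity),
              ENNReal.ofReal_mul (by norm_num : (0:ℝ) ≤ 2),
              ENNReal.ofReal_mul (by norm_num : (0:ℝ) ≤ 2)]
            simp [hφdef]
    have hfin : ∫⁻ t in Ioi (0:ℝ), ENNReal.ofReal (‖g (t + σ) - g t‖ ^ 2) < ⊤ := by
      calc ∫⁻ t in Ioi (0:ℝ), ENNReal.ofReal (‖g (t + σ) - g t‖ ^ 2)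
          ≤ ∫⁻ t in Ioi (0:ℝ), (2 * φ (t + σ) + 2 * φ t) := lintegral_mono hpt
        _ ≤ ∫⁻ t : ℝ, (2 * φ (t + σ) + 2 * φ t) :=
            lintegral_mono' Measure.restrict_le_self le_rfl
        _ = 2 * A + 2 * A := by
            rw [lintegral_add_left (hφσ.const_mul 2),
              lintegral_const_mul 2 hφσ,
              lintegral_const_mul 2 hφm, htrans σ, ← hAdef]
        _ < ⊤ := by
            have hA : A < ⊤ := lt_of_le_of_lt hAM ENNReal.ofReal_lt_top
            finiteness
    have hint : IntegrableOn (fun t : ℝ => ‖g (t + σ) - g t‖ ^ 2) (Ioi 0) := by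
      refine ⟨hmeas2.aestronglyMeasurable, ?_⟩
      rw [hasFiniteIntegral_iff_ofReal (Filter.Eventually.of_forall fun t => sq_nonneg _)]
      exact hfin
    have hcv := ofReal_integral_eq_lintegral_ofReal hint
      (Filter.Eventually.of_forall fun t => sq_nonneg _)
    rw [← hcv]
    exact (ENNReal.ofReal_lt_ofReal_iff hε₁).2 hb
  -- averaging: choose a good σ
  have havg : ∃ σ ∈ Ioo (0:ℝ) δ₁,
      ∫⁻ t in Ioc (0:ℝ) s, φ (t + σ) ≤ ENNReal.ofReal (2 * s * M / δ₁) := by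
    by_contra hcon
    push_neg at hcon
    have hswap : ∫⁻ σ in Ioo (0:ℝ) δ₁, ∫⁻ t in Ioc (0:ℝ) s, φ (t + σ)
        ≤ ENNReal.ofReal s * ENNReal.ofReal M := by
      have hswapm : AEMeasurable (Function.uncurry fun σ t : ℝ => φ (t + σ))
          ((volume.restrict (Ioo (0:ℝ) δ₁)).prod (volume.restrict (Ioc (0:ℝ) s))) := by
        apply Measurable.aemeasurable
        exact hφm.comp (measurable_snd.add measurable_fst)
      rw [lintegral_lintegral_swap hswapm]
      calc ∫⁻ t in Ioc (0:ℝ) s, ∫⁻ σ in Ioo (0:ℝ) δ₁, φ (t + σ)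
          ≤ ∫⁻ _t in Ioc (0:ℝ) s, A := by
            apply lintegral_mono
            intro t
            calc ∫⁻ σ in Ioo (0:ℝ) δ₁, φ (t + σ)
                ≤ ∫⁻ σ : ℝ, φ (t + σ) := lintegral_mono' Measure.restrict_le_self le_rfl
              _ = ∫⁻ σ : ℝ, φ (σ + t) := by simp_rw [add_comm]
              _ = A := htrans t
        _ = A * volume (Ioc (0:ℝ) s) := setLIntegral_const _ _
        _ = A * ENNReal.ofReal s := by rw [Real.volume_Ioc, sub_zero]
        _ ≤ ENNReal.ofReal M * ENNReal.ofReal s := mul_le_mul_left hAM _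
        _ = ENNReal.ofReal s * ENNReal.ofReal M := mul_comm _ _
    have hlow : ENNReal.ofReal (2 * s * M / δ₁) * ENNReal.ofReal δ₁
        ≤ ∫⁻ σ in Ioo (0:ℝ) δ₁, ∫⁻ t in Ioc (0:ℝ) s, φ (t + σ) := by
      have hmono := setLIntegral_mono' (μ := volume) measurableSet_Ioo
        (f := fun _ : ℝ => ENNReal.ofReal (2 * s * M / δ₁))
        (g := fun σ : ℝ => ∫⁻ t in Ioc (0:ℝ) s, φ (t + σ))
        (fun σ hσ => (hcon σ hσ).le)
      rwa [setLIntegral_const, Real.volume_Ioo, sub_zero] at hmono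
    have hle := hlow.trans hswap
    rw [← ENNReal.ofReal_mul (by positivity), ← ENNReal.ofReal_mul (le_of_lt hs0)] at hle
    have hle2 : 2 * s * M / δ₁ * δ₁ ≤ s * M :=
      (ENNReal.ofReal_le_ofReal_iff (by nlinarith)).1 hle
    have hcancel : 2 * s * M / δ₁ * δ₁ = 2 * (s * M) := by
      field_simp
    rw [hcancel] at hle2
    nlinarith [mul_pos hs0 hM]
  obtain ⟨σ, hσmem, hσbound⟩ := havg
  have hφσ : Measurable fun t : ℝ => φ (t + σ) := hφm.comp (measurable_add_const σ)
  -- bound on ∫_0^s ‖g‖²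
  have hB : ∫⁻ t in Ioc (0:ℝ) s, φ t
      ≤ 2 * ENNReal.ofReal (ε ^ 2 / 16) + 2 * ENNReal.ofReal (2 * s * M / δ₁) := by
    have hpt : ∀ t : ℝ, φ t ≤ 2 * ENNReal.ofReal (‖g (t + σ) - g t‖ ^ 2) + 2 * φ (t + σ) := by
      intro t
      calc φ t = ENNReal.ofReal (‖g t‖ ^ 2) := by rw [hφdef]
        _ ≤ ENNReal.ofReal (2 * ‖g (t + σ) - g t‖ ^ 2 + 2 * ‖g (t + σ)‖ ^ 2) :=
            ENNReal.ofReal_le_ofReal (normsq_le_of_sub_aux _ _)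
        _ = 2 * ENNReal.ofReal (‖g (t + σ) - g t‖ ^ 2) + 2 * φ (t + σ) := by
            rw [ENNReal.ofReal_add (by positivity) (by positivity),
              ENNReal.ofReal_mul (by norm_num : (0:ℝ) ≤ 2),
              ENNReal.ofReal_mul (by norm_num : (0:ℝ) ≤ 2)]
            simp [hφdef]
    have hmeas3 : Measurable (fun t : ℝ => ENNReal.ofReal (‖g (t + σ) - g t‖ ^ 2)) :=
      ENNReal.measurable_ofReal.comp
        (((hgm.comp (measurable_add_const σ)).sub hgm).norm.pow_const 2)
    calc ∫⁻ t in Ioc (0:ℝ) s, φ t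
        ≤ ∫⁻ t in Ioc (0:ℝ) s,
            (2 * ENNReal.ofReal (‖g (t + σ) - g t‖ ^ 2) + 2 * φ (t + σ)) :=
          lintegral_mono hpt
      _ = 2 * (∫⁻ t in Ioc (0:ℝ) s, ENNReal.ofReal (‖g (t + σ) - g t‖ ^ 2))
            + 2 * ∫⁻ t in Ioc (0:ℝ) s, φ (t + σ) := by
          rw [lintegral_add_left (hmeas3.const_mul 2),
            lintegral_const_mul 2 hmeas3,
            lintegral_const_mul 2 hφσ]
      _ ≤ 2 * (∫⁻ t in Ioi (0:ℝ), ENNReal.ofReal (‖g (t + σ) - g t‖ ^ 2))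
            + 2 * ENNReal.ofReal (2 * s * M / δ₁) :=
          add_le_add
            (mul_le_mul_right
              (lintegral_mono' (Measure.restrict_mono Ioc_subset_Ioi_self le_rfl) le_rfl) 2)
            (mul_le_mul_right hσbound 2)
      _ ≤ 2 * ENNReal.ofReal (ε ^ 2 / 16) + 2 * ENNReal.ofReal (2 * s * M / δ₁) :=
          add_le_add (mul_le_mul_right (hΦ σ hσmem).le 2) le_rfl
  -- bound on the shifted difference D
  have hD : ∫⁻ t in Ioi (0:ℝ), ENNReal.ofReal (‖g t - g (t - s)‖ ^ 2)
      ≤ ENNReal.ofReal (ε ^ 2 / 16)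
        + (2 * ENNReal.ofReal (ε ^ 2 / 16) + 2 * ENNReal.ofReal (2 * s * M / δ₁)) := by
    have hz : ∫⁻ t in Iic (0:ℝ), ENNReal.ofReal (‖g t - g (t - s)‖ ^ 2) = 0 := by
      rw [← lintegral_indicator measurableSet_Iic]
      have hind : (Iic (0:ℝ)).indicator
          (fun t => ENNReal.ofReal (‖g t - g (t - s)‖ ^ 2)) = fun _ => 0 := by
        funext t
        by_cases ht : t ≤ 0
        · rw [Set.indicator_of_mem (mem_Iic.2 ht)]
          rw [hg0 t ht, hg0 (t - s) (by linarith)]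
          simp
        · rw [Set.indicator_of_notMem (by simpa using ht)]
      rw [hind, lintegral_zero]
    have hext : ∫⁻ t in Ioi (0:ℝ), ENNReal.ofReal (‖g t - g (t - s)‖ ^ 2)
        = ∫⁻ t : ℝ, ENNReal.ofReal (‖g t - g (t - s)‖ ^ 2) := by
      have h := lintegral_add_compl (μ := volume)
        (fun t => ENNReal.ofReal (‖g t - g (t - s)‖ ^ 2)) (measurableSet_Ioi (a := (0:ℝ)))
      rw [compl_Ioi, hz, add_zero] at h
      exact h
    have htr : ∫⁻ t : ℝ, ENNReal.ofReal (‖g t - g (t - s)‖ ^ 2)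
        = ∫⁻ t : ℝ, ENNReal.ofReal (‖g (t + s) - g t‖ ^ 2) := by
      rw [← lintegral_add_right_eq_self
        (fun u => ENNReal.ofReal (‖g u - g (u - s)‖ ^ 2)) s]
      simp only [add_sub_cancel_right]
    have hsplit2 : ∫⁻ t : ℝ, ENNReal.ofReal (‖g (t + s) - g t‖ ^ 2)
        = (∫⁻ t in Ioi (0:ℝ), ENNReal.ofReal (‖g (t + s) - g t‖ ^ 2))
          + ∫⁻ t in Iic (0:ℝ), φ (t + s) := by
      have h := lintegral_add_compl (μ := volume)
        (fun t => ENNReal.ofReal (‖g (t + s) - g t‖ ^ 2)) (measurableSet_Ioi (a := (0:ℝ)))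
      rw [compl_Ioi] at h
      rw [← h]
      congr 1
      refine setLIntegral_congr_fun measurableSet_Iic
        (fun t ht => ?_)
      rw [hg0 t ht, sub_zero, hφdef]
    have hIicpart : ∫⁻ t in Iic (0:ℝ), φ (t + s) = ∫⁻ t in Ioc (0:ℝ) s, φ t := by
      have h1 : ∫⁻ t in Iic (0:ℝ), φ (t + s)
          = ∫⁻ t : ℝ, (Iic s).indicator φ (t + s) := by
        rw [← lintegral_indicator measurableSet_Iic]
        congr 1
        funext t
        by_cases ht : t ≤ 0
        · rw [Set.indicator_of_mem (mem_Iic.2 ht),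
            Set.indicator_of_mem (mem_Iic.2 (by linarith))]
        · rw [Set.indicator_of_notMem (by simpa using ht),
            Set.indicator_of_notMem (by simp only [mem_Iic]; push_neg at ht ⊢; linarith)]
      have h2 : ∫⁻ t : ℝ, (Iic s).indicator φ (t + s) = ∫⁻ t in Iic s, φ t := by
        rw [lintegral_add_right_eq_self ((Iic s).indicator φ) s,
          lintegral_indicator measurableSet_Iic]
      have h3 : ∫⁻ t in Iic s, φ t = ∫⁻ t in Ioc (0:ℝ) s, φ t := by
        rw [← Set.Iic_union_Ioc_eq_Iic hs0.le,
          lintegral_union measurableSet_Ioc (Set.Iic_disjoint_Ioc le_rfl), hIic0, zero_add]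
      rw [h1, h2, h3]
    calc ∫⁻ t in Ioi (0:ℝ), ENNReal.ofReal (‖g t - g (t - s)‖ ^ 2)
        = (∫⁻ t in Ioi (0:ℝ), ENNReal.ofReal (‖g (t + s) - g t‖ ^ 2))
          + ∫⁻ t in Ioc (0:ℝ) s, φ t := by rw [hext, htr, hsplit2, hIicpart]
      _ ≤ ENNReal.ofReal (ε ^ 2 / 16)
          + (2 * ENNReal.ofReal (ε ^ 2 / 16) + 2 * ENNReal.ofReal (2 * s * M / δ₁)) :=
          add_le_add (hΦ s ⟨hs0, hsδ₁⟩).le hB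
  -- main pointwise bound and conclusion
  have hmain : ∫⁻ t in Ioi (0:ℝ),
      ENNReal.ofReal (Real.exp (-(2 * x * t)) * ‖f t - f (t - s)‖ ^ 2)
      ≤ 2 * (∫⁻ t in Ioi (0:ℝ), ENNReal.ofReal (‖g t - g (t - s)‖ ^ 2))
        + 2 * (ENNReal.ofReal ((x * s) ^ 2) * A) := by
    have hpt : ∀ t : ℝ,
        ENNReal.ofReal (Real.exp (-(2 * x * t)) * ‖f t - f (t - s)‖ ^ 2)
        ≤ 2 * ENNReal.ofReal (‖g t - g (t - s)‖ ^ 2)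
          + 2 * (ENNReal.ofReal ((x * s) ^ 2) * φ (t - s)) := by
      intro t
      have hexp : Real.exp (-(x * s)) * Real.exp (-(x * (t - s))) = Real.exp (-(x * t)) := by
        rw [← Real.exp_add]; ring_nf
      have h1 : g t - ((Real.exp (-(x * s)) : ℝ) : ℂ) * g (t - s)
          = (Real.exp (-(x * t)) : ℂ) * (f t - f (t - s)) := by
        simp only [hgdef]
        rw [show ((Real.exp (-(x * t)) : ℝ) : ℂ)
            = ((Real.exp (-(x * s)) : ℝ) : ℂ) * ((Real.exp (-(x * (t - s))) : ℝ) : ℂ) by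
          rw [← Complex.ofReal_mul, hexp]]
        ring
      have heq : Real.exp (-(2 * x * t)) * ‖f t - f (t - s)‖ ^ 2
          = ‖g t - ((Real.exp (-(x * s)) : ℝ) : ℂ) * g (t - s)‖ ^ 2 := by
        rw [h1, norm_mul, Complex.norm_real, Real.norm_of_nonneg (Real.exp_pos _).le,
          mul_pow]
        have he : Real.exp (-(x * t)) ^ 2 = Real.exp (-(2 * x * t)) := by
          rw [sq, ← Real.exp_add]; ring_nf
        rw [he]
      have hkey : ‖g t - ((Real.exp (-(x * s)) : ℝ) : ℂ) * g (t - s)‖ ^ 2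
          ≤ 2 * ‖g t - g (t - s)‖ ^ 2 + 2 * (x * s) ^ 2 * ‖g (t - s)‖ ^ 2 := by
        refine key_ineq_aux (mul_nonneg hx hs0.le) ?_ ?_ (g t) (g (t - s))
        · have := Real.add_one_le_exp (-(x * s)); linarith
        · calc Real.exp (-(x * s)) ≤ Real.exp 0 :=
                Real.exp_le_exp.2 (by nlinarith)
            _ = 1 := Real.exp_zero
      rw [heq]
      calc ENNReal.ofReal (‖g t - ((Real.exp (-(x * s)) : ℝ) : ℂ) * g (t - s)‖ ^ 2)
          ≤ ENNReal.ofReal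
              (2 * ‖g t - g (t - s)‖ ^ 2 + 2 * (x * s) ^ 2 * ‖g (t - s)‖ ^ 2) :=
            ENNReal.ofReal_le_ofReal hkey
        _ = 2 * ENNReal.ofReal (‖g t - g (t - s)‖ ^ 2)
            + 2 * (ENNReal.ofReal ((x * s) ^ 2) * φ (t - s)) := by
            rw [ENNReal.ofReal_add (by positivity) (by positivity),
              ENNReal.ofReal_mul (by norm_num : (0:ℝ) ≤ 2),
              show (2 : ℝ) * (x * s) ^ 2 * ‖g (t - s)‖ ^ 2
                = 2 * ((x * s) ^ 2 * ‖g (t - s)‖ ^ 2) by ring,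
              ENNReal.ofReal_mul (by norm_num : (0:ℝ) ≤ 2),
              ENNReal.ofReal_mul (sq_nonneg (x * s))]
            simp [hφdef]
    have hmeasd : Measurable (fun t : ℝ => ENNReal.ofReal (‖g t - g (t - s)‖ ^ 2)) :=
      ENNReal.measurable_ofReal.comp
        (((hgm.sub (hgm.comp (measurable_sub_const s)))).norm.pow_const 2)
    have hmeasφs : Measurable (fun t : ℝ => φ (t - s)) :=
      hφm.comp (measurable_sub_const s)
    calc ∫⁻ t in Ioi (0:ℝ),
          ENNReal.ofReal (Real.exp (-(2 * x * t)) * ‖f t - f (t - s)‖ ^ 2)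
        ≤ ∫⁻ t in Ioi (0:ℝ),
            (2 * ENNReal.ofReal (‖g t - g (t - s)‖ ^ 2)
              + 2 * (ENNReal.ofReal ((x * s) ^ 2) * φ (t - s))) := lintegral_mono hpt
      _ = 2 * (∫⁻ t in Ioi (0:ℝ), ENNReal.ofReal (‖g t - g (t - s)‖ ^ 2))
            + (2 * ENNReal.ofReal ((x * s) ^ 2)) * ∫⁻ t in Ioi (0:ℝ), φ (t - s) := by
          rw [lintegral_add_left (hmeasd.const_mul 2), lintegral_const_mul 2 hmeasd]
          congr 1
          rw [← lintegral_const_mul _ hmeasφs]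
          congr 1
          funext t
          ring
      _ ≤ 2 * (∫⁻ t in Ioi (0:ℝ), ENNReal.ofReal (‖g t - g (t - s)‖ ^ 2))
            + (2 * ENNReal.ofReal ((x * s) ^ 2)) * A := by
          refine add_le_add le_rfl (mul_le_mul_right ?_ _)
          calc ∫⁻ t in Ioi (0:ℝ), φ (t - s) ≤ ∫⁻ t : ℝ, φ (t - s) :=
                lintegral_mono' Measure.restrict_le_self le_rfl
            _ = A := by
                simp_rw [sub_eq_add_neg]
                exact htrans (-s)
      _ = 2 * (∫⁻ t in Ioi (0:ℝ), ENNReal.ofReal (‖g t - g (t - s)‖ ^ 2))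
            + 2 * (ENNReal.ofReal ((x * s) ^ 2) * A) := by ring
  -- combine everything
  have htotal : ∫⁻ t in Ioi (0:ℝ),
      ENNReal.ofReal (Real.exp (-(2 * x * t)) * ‖f t - f (t - s)‖ ^ 2)
      ≤ ENNReal.ofReal (6 * (ε ^ 2 / 16) + 4 * (2 * s * M / δ₁) + 2 * ((x * s) ^ 2 * M)) := by
    have hstep : ∫⁻ t in Ioi (0:ℝ),
        ENNReal.ofReal (Real.exp (-(2 * x * t)) * ‖f t - f (t - s)‖ ^ 2)
        ≤ 2 * (ENNReal.ofReal (ε ^ 2 / 16)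
            + (2 * ENNReal.ofReal (ε ^ 2 / 16) + 2 * ENNReal.ofReal (2 * s * M / δ₁)))
          + 2 * (ENNReal.ofReal ((x * s) ^ 2) * ENNReal.ofReal M) :=
      hmain.trans (add_le_add (mul_le_mul_right hD 2)
        (mul_le_mul_right (mul_le_mul_right hAM _) 2))
    refine hstep.trans (le_of_eq ?_)
    rw [ENNReal.ofReal_add (by positivity)
        (mul_nonneg (by norm_num) (mul_nonneg (sq_nonneg _) hM.le)),
      ENNReal.ofReal_add (by positivity)
        (mul_nonneg (by norm_num) (div_nonneg (by nlinarith) hδ₁.le)),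
      ENNReal.ofReal_mul (by norm_num : (0:ℝ) ≤ 6),
      ENNReal.ofReal_mul (by norm_num : (0:ℝ) ≤ 4),
      ENNReal.ofReal_mul (by norm_num : (0:ℝ) ≤ 2),
      ENNReal.ofReal_mul (sq_nonneg (x * s))]
    simp only [ENNReal.ofReal_ofNat]
    ring
  -- real arithmetic : total ≤ ε²/2
  have hreal : 6 * (ε ^ 2 / 16) + 4 * (2 * s * M / δ₁) + 2 * ((x * s) ^ 2 * M) ≤ ε ^ 2 / 2 := by
    have h1 : 4 * (2 * s * M / δ₁) ≤ ε ^ 2 / 16 := by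
      have hs128 : s * (128 * M) < ε ^ 2 * δ₁ := by
        rw [hδ₂def] at hsδ₂
        exact (lt_div_iff₀ (by linarith)).1 hsδ₂
      calc 4 * (2 * s * M / δ₁) = 8 * (s * M) / δ₁ := by ring
        _ ≤ ε ^ 2 / 16 := by
            rw [div_le_div_iff₀ hδ₁ (by norm_num : (0:ℝ) < 16)]
            nlinarith
    have h2 : 2 * ((x * s) ^ 2 * M) ≤ ε ^ 2 / 16 := by
      have hsr : s * ((x + 1) * Real.sqrt (32 * M)) < ε := by
        rw [hδ₃def] at hsδ₃
        exact (lt_div_iff₀ (mul_pos (by linarith) hsqrtpos)).1 hsδ₃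
      have hnn : 0 ≤ s * ((x + 1) * Real.sqrt (32 * M)) :=
        mul_nonneg hs0.le (mul_nonneg (by linarith) hsqrtpos.le)
      have hsq : (s * ((x + 1) * Real.sqrt (32 * M))) ^ 2 < ε ^ 2 := by nlinarith
      have hr2 : Real.sqrt (32 * M) ^ 2 = 32 * M := Real.sq_sqrt (by linarith)
      have hxs : (x * s) ^ 2 ≤ ((x + 1) * s) ^ 2 := by
        nlinarith [sq_nonneg s, mul_nonneg hx (sq_nonneg s)]
      have hs2 : (s * ((x + 1) * Real.sqrt (32 * M))) ^ 2 = 32 * M * ((x + 1) * s) ^ 2 := by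
        rw [mul_pow, mul_pow, hr2]; ring
      have h32 : 32 * M * ((x + 1) * s) ^ 2 < ε ^ 2 := hs2 ▸ hsq
      nlinarith [mul_le_mul_of_nonneg_left hxs hM.le]
    linarith
  -- final conversion
  have hmeasT : Measurable
      (fun t : ℝ => Real.exp (-(2 * x * t)) * ‖f t - f (t - s)‖ ^ 2) := by
    refine Measurable.mul ?_ ?_
    · exact Real.measurable_exp.comp ((measurable_const.mul measurable_id).neg)
    · exact (continuous_norm.measurable.comp
        (hfm.sub (hfm.comp (measurable_sub_const s)))).pow_const 2
  rw [integral_eq_lintegral_of_nonneg_ae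
    (Filter.Eventually.of_forall fun t =>
      mul_nonneg (Real.exp_pos _).le (pow_nonneg (norm_nonneg _) 2))
    hmeasT.aestronglyMeasurable]
  rw [Real.sqrt_lt' hε]
  have hfinal : (∫⁻ t in Ioi (0:ℝ),
      ENNReal.ofReal (Real.exp (-(2 * x * t)) * ‖f t - f (t - s)‖ ^ 2)).toReal
      ≤ ε ^ 2 / 2 :=
    ENNReal.toReal_le_of_le_ofReal (by positivity)
      (htotal.trans (ENNReal.ofReal_le_ofReal hreal))
  have hεsq : 0 < ε ^ 2 := pow_pos hε 2
  linarith
end
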